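/- arXiv:1509.04190 — 8 statements merged into one kernel-verified Lean document; each statement's English description precedes it below -/
import Mathlib

section
/- For every integer n ≥ 1, the n-th Bernoulli number satisfies B_n = n! · Σ_{j=1}^{n} (-1)^j Σ over tuples (i_1,…,i_n) of non-negative integers with i_1+⋯+i_n = j and i_1+2i_2+⋯+n·i_n = n of the multinomial coefficient j!/(i_1!⋯i_n!) divided by 2!^{i_1}·3!^{i_2}⋯(n+1)!^{i_n}. -/
open PowerSeries Finset

noncomputable def Eps : PowerSeries ℚ := PowerSeries.mk fun k => 1 / (k+1).factorial

lemma X_mul_Eps : (X : PowerSeries ℚ) * Eps = exp ℚ - 1 := by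
  ext m
  cases m with
  | zero => simp [Eps]
  | succ m => simp [Eps, PowerSeries.coeff_succ_X_mul, coeff_exp, Nat.succ_ne_zero]

lemma B_mul_Eps : bernoulliPowerSeries ℚ * Eps = 1 := by
  have h := bernoulliPowerSeries_mul_exp_sub_one ℚ
  rw [← X_mul_Eps] at h
  have : (X : PowerSeries ℚ) * (bernoulliPowerSeries ℚ * Eps) = X * 1 := by
    rw [mul_one, ← mul_assoc, mul_comm X, mul_assoc]
    exact h
  exact mul_left_cancel₀ X_ne_zero this

noncomputable def Fps : PowerSeries ℚ := Eps - 1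

lemma X_dvd_Fps : (X : PowerSeries ℚ) ∣ Fps := by
  rw [X_dvd_iff]
  simp [Fps, Eps, PowerSeries.constantCoeff_mk]

lemma coeff_B_eq (n : ℕ) : (coeff n) (bernoulliPowerSeries ℚ) =
    ∑ j ∈ range (n+1), (-1:ℚ)^j * (coeff n) (Fps ^ j) := by
  have hB : bernoulliPowerSeries ℚ * (1 + Fps) = 1 := by
    have : (1 : PowerSeries ℚ) + Fps = Eps := by rw [Fps]; ring
    rw [this, B_mul_Eps]
  set S : PowerSeries ℚ := ∑ j ∈ range (n+1), (-1:ℚ)^j • Fps ^ j with hS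
  have hgeom : S * (1 + Fps) = 1 - (-Fps)^(n+1) := by
    have := geom_sum_mul (-Fps) (n+1)
    have hS' : S = ∑ i ∈ range (n+1), (-Fps)^i := by
      rw [hS]; apply Finset.sum_congr rfl; intro j _
      rw [show -Fps = (-1:ℚ) • Fps by simp, smul_pow]
    rw [hS']
    calc (∑ i ∈ range (n+1), (-Fps)^i) * (1 + Fps)
        = -((∑ i ∈ range (n+1), (-Fps)^i) * (-Fps - 1)) := by ring
      _ = -((-Fps)^(n+1) - 1) := by rw [this]
      _ = 1 - (-Fps)^(n+1) := by ring
  have hBS : bernoulliPowerSeries ℚ = S + bernoulliPowerSeries ℚ * (-Fps)^(n+1) := by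
    calc bernoulliPowerSeries ℚ = bernoulliPowerSeries ℚ * (S * (1 + Fps) + (-Fps)^(n+1)) := by
          rw [hgeom]; ring
      _ = S * (bernoulliPowerSeries ℚ * (1 + Fps)) + bernoulliPowerSeries ℚ * (-Fps)^(n+1) := by
          ring
      _ = S + bernoulliPowerSeries ℚ * (-Fps)^(n+1) := by rw [hB]; ring
  have hzero : (coeff n) (bernoulliPowerSeries ℚ * (-Fps)^(n+1)) = 0 := by
    have hdvd : (X : PowerSeries ℚ)^(n+1) ∣ bernoulliPowerSeries ℚ * (-Fps)^(n+1) :=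
      Dvd.dvd.mul_left (pow_dvd_pow_of_dvd ((dvd_neg).mpr X_dvd_Fps) (n+1)) _
    exact X_pow_dvd_iff.mp hdvd n (Nat.lt_succ_self n)
  rw [hBS, map_add, hzero, add_zero, hS, map_sum]
  apply Finset.sum_congr rfl; intro j _
  rw [map_smul, smul_eq_mul]

noncomputable def Tps (n : ℕ) : PowerSeries ℚ :=
  ∑ k ∈ Icc 1 n, PowerSeries.C (R := ℚ) (1/(k+1).factorial) * X^k

lemma coeff_Tps_eq (n m : ℕ) (hm : m ≤ n) : coeff m (Tps n) = coeff m Fps := by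
  rw [Tps, map_sum]
  simp only [coeff_C_mul, coeff_X_pow]
  simp_rw [mul_ite, mul_one, mul_zero]
  rw [Finset.sum_ite_eq (Icc 1 n) m (fun k => 1/((k+1).factorial : ℚ))]
  rcases Nat.eq_zero_or_pos m with h0 | h1
  · subst h0
    simp [Fps, Eps]
  · rw [if_pos (Finset.mem_Icc.mpr ⟨h1, hm⟩)]
    simp [Fps, Eps]
    rw [if_neg (by omega : ¬ m = 0), sub_zero]

lemma coeff_Fpow_eq_Tpow (n j : ℕ) : coeff n (Fps ^ j) = coeff n ((Tps n) ^ j) := by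
  have hdvd : (X : PowerSeries ℚ)^(n+1) ∣ Fps - Tps n := by
    rw [X_pow_dvd_iff]
    intro m hm
    rw [map_sub, coeff_Tps_eq n m (Nat.lt_succ_iff.mp hm), sub_self]
  have h2 : (X : PowerSeries ℚ)^(n+1) ∣ Fps ^ j - (Tps n) ^ j :=
    hdvd.trans (sub_dvd_pow_sub_pow _ _ j)
  have := X_pow_dvd_iff.mp h2 n (Nat.lt_succ_self n)
  rw [map_sub] at this
  linarith

lemma coeff_Tpow (n j : ℕ) : coeff n ((Tps n) ^ j) =
    ∑ k ∈ Finset.piAntidiag (Icc 1 n) j,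
      if ∑ m ∈ Icc 1 n, m * k m = n then
        (Nat.multinomial (Icc 1 n) k : ℚ) * ∏ m ∈ Icc 1 n, (1/((m+1).factorial : ℚ))^(k m)
      else 0 := by
  rw [Tps, Finset.sum_pow_eq_sum_piAntidiag, map_sum]
  apply Finset.sum_congr rfl
  intro k _
  have : ∀ m ∈ Icc 1 n, (PowerSeries.C (R := ℚ) (1/((m+1).factorial:ℚ)) * X^m)^(k m)
      = PowerSeries.C (R := ℚ) ((1/((m+1).factorial:ℚ))^(k m)) * X^(m * k m) := by
    intro m _
    rw [mul_pow, ← map_pow, ← pow_mul]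
  rw [Finset.prod_congr rfl this, Finset.prod_mul_distrib, ← map_prod,
    Finset.prod_pow_eq_pow_sum, ← map_natCast (PowerSeries.C (R := ℚ)) (Nat.multinomial (Icc 1 n) k),
    ← mul_assoc, ← map_mul, coeff_C_mul, coeff_X_pow]
  by_cases h : ∑ m ∈ Icc 1 n, m * k m = n
  · rw [if_pos h.symm, if_pos h, mul_one]
  · rw [if_neg (fun hh => h hh.symm), if_neg h, mul_zero]

lemma Icc_one_eq_map (n : ℕ) :
    Icc 1 n = Finset.map ⟨fun t => t + 1, fun a b h => by simpa using h⟩ (range n) := by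
  ext m
  simp only [Finset.mem_map, Finset.mem_range, Finset.mem_Icc, Function.Embedding.coeFn_mk]
  constructor
  · rintro ⟨h1, h2⟩; exact ⟨m - 1, by omega, by show m - 1 + 1 = m; omega⟩
  · rintro ⟨a, ha, rfl⟩; show 1 ≤ a + 1 ∧ a + 1 ≤ n; omega

lemma prod_Icc_one {M : Type*} [CommMonoid M] (n : ℕ) (f : ℕ → M) :
    ∏ m ∈ Icc 1 n, f m = ∏ t : Fin n, f ((t:ℕ)+1) := by
  rw [Icc_one_eq_map, Finset.prod_map]
  show ∏ x ∈ range n, f (x + 1) = _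
  rw [← Fin.prod_univ_eq_prod_range (fun r => f (r + 1)) n]

lemma sum_Icc_one {M : Type*} [AddCommMonoid M] (n : ℕ) (f : ℕ → M) :
    ∑ m ∈ Icc 1 n, f m = ∑ t : Fin n, f ((t:ℕ)+1) := by
  rw [Icc_one_eq_map, Finset.sum_map]
  show ∑ x ∈ range n, f (x + 1) = _
  rw [← Fin.sum_univ_eq_sum_range (fun r => f (r + 1)) n]

def phiJKS (n : ℕ) (i : Fin n → Fin (n+1)) : ℕ → ℕ :=
  fun m => if h : 1 ≤ m ∧ m ≤ n then (i ⟨m-1, by omega⟩ : ℕ) else 0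

lemma phiJKS_succ (n : ℕ) (i : Fin n → Fin (n+1)) (t : Fin n) :
    phiJKS n i ((t:ℕ)+1) = (i t : ℕ) := by
  have ht := t.isLt
  rw [phiJKS, dif_pos ⟨by omega, by omega⟩]
  congr 1

lemma multinomial_cast_eq (s : Finset ℕ) (k : ℕ → ℕ) :
    (Nat.multinomial s k : ℚ) = ((∑ m ∈ s, k m).factorial : ℚ) / ∏ m ∈ s, ((k m).factorial : ℚ) := by
  have h := Nat.multinomial_spec s k
  have hne : (∏ m ∈ s, ((k m).factorial : ℚ)) ≠ 0 :=
    Finset.prod_ne_zero_iff.mpr fun m _ => Nat.cast_ne_zero.mpr (Nat.factorial_ne_zero _)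
  field_simp
  rw [mul_comm]
  exact_mod_cast congrArg (Nat.cast : ℕ → ℚ) h

lemma inner_eq (n j : ℕ) :
    (∑ i : Fin n → Fin (n+1),
      if (∑ t : Fin n, (i t : ℕ)) = j ∧ (∑ t : Fin n, ((t : ℕ) + 1) * (i t : ℕ)) = n then
        (j.factorial : ℚ) / (∏ t : Fin n, ((i t : ℕ).factorial : ℚ)) /
          (∏ t : Fin n, (((t : ℕ) + 2).factorial : ℚ) ^ (i t : ℕ))
      else 0)
    = ∑ k ∈ Finset.piAntidiag (Icc 1 n) j,
        if ∑ m ∈ Icc 1 n, m * k m = n then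
          (Nat.multinomial (Icc 1 n) k : ℚ) * ∏ m ∈ Icc 1 n, (1/((m+1).factorial : ℚ))^(k m)
        else 0 := by
  rw [← Finset.sum_filter, ← Finset.sum_filter]
  refine Finset.sum_nbij' (phiJKS n)
    (fun k t => ⟨min (k ((t:ℕ)+1)) n, by omega⟩) ?_ ?_ ?_ ?_ ?_
  · -- maps to
    intro i hi
    rw [Finset.mem_filter] at hi
    rw [Finset.mem_filter]
    obtain ⟨-, h1, h2⟩ := hi
    refine ⟨Finset.mem_piAntidiag.mpr ⟨?_, ?_⟩, ?_⟩
    · rw [sum_Icc_one]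
      simp only [phiJKS_succ]
      exact h1
    · intro m hm
      rw [phiJKS] at hm
      by_cases h : 1 ≤ m ∧ m ≤ n
      · exact Finset.mem_Icc.mpr h
      · rw [dif_neg h] at hm; exact absurd rfl hm
    · rw [sum_Icc_one]
      simp only [phiJKS_succ]
      exact h2
  · -- maps back
    intro k hk
    rw [Finset.mem_filter] at hk
    obtain ⟨hk1, hk2⟩ := hk
    obtain ⟨hsum, hsupp⟩ := Finset.mem_piAntidiag.mp hk1
    have hle : ∀ t : Fin n, k ((t:ℕ)+1) ≤ n := by
      intro t
      have hmem : (t:ℕ)+1 ∈ Icc 1 n := Finset.mem_Icc.mpr ⟨by omega, by omega⟩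
      have := Finset.single_le_sum (f := fun m => m * k m) (fun m _ => Nat.zero_le _) hmem
      rw [hk2] at this
      calc k ((t:ℕ)+1) ≤ ((t:ℕ)+1) * k ((t:ℕ)+1) := Nat.le_mul_of_pos_left _ (by omega)
        _ ≤ n := this
    rw [Finset.mem_filter]
    refine ⟨Finset.mem_univ _, ?_, ?_⟩
    · refine (Finset.sum_congr rfl fun t _ => ?_).trans ((sum_Icc_one n k).symm.trans hsum)
      simp [Nat.min_eq_left (hle t)]
    · refine (Finset.sum_congr rfl fun t _ => ?_).trans
        ((sum_Icc_one n (fun m => m * k m)).symm.trans hk2)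
      simp [Nat.min_eq_left (hle t)]
  · -- left inverse
    intro i hi
    funext t
    apply Fin.ext
    simp only [phiJKS_succ]
    exact Nat.min_eq_left (Nat.lt_succ_iff.mp (i t).isLt)
  · -- right inverse
    intro k hk
    rw [Finset.mem_filter] at hk
    obtain ⟨hk1, hk2⟩ := hk
    obtain ⟨hsum, hsupp⟩ := Finset.mem_piAntidiag.mp hk1
    funext m
    rw [phiJKS]
    by_cases h : 1 ≤ m ∧ m ≤ n
    · rw [dif_pos h]
      have hle : k m ≤ n := by
        have hmem : m ∈ Icc 1 n := Finset.mem_Icc.mpr h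
        have := Finset.single_le_sum (f := fun m => m * k m) (fun m _ => Nat.zero_le _) hmem
        rw [hk2] at this
        calc k m ≤ m * k m := Nat.le_mul_of_pos_left _ (by omega)
          _ ≤ n := this
      have : (m - 1 : ℕ) + 1 = m := by omega
      simp [this, Nat.min_eq_left hle]
    · rw [dif_neg h]
      by_contra hne
      exact h (Finset.mem_Icc.mp (hsupp m (fun hh => hne hh.symm)))
  · -- values
    intro i hi
    rw [Finset.mem_filter] at hi
    obtain ⟨-, h1, h2⟩ := hi
    rw [multinomial_cast_eq]

    rw [sum_Icc_one n (phiJKS n i), prod_Icc_one n (fun m => ((phiJKS n i m).factorial : ℚ)),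
      prod_Icc_one n (fun m => (1/((m+1).factorial : ℚ))^(phiJKS n i m))]
    simp only [phiJKS_succ]
    rw [h1]
    rw [div_div]
    rw [show (∏ x : Fin n, (1 / (((x:ℕ)+1+1).factorial : ℚ)) ^ (i x : ℕ)) =
        (∏ x : Fin n, (((x:ℕ)+2).factorial : ℚ) ^ (i x : ℕ))⁻¹ from by
      rw [← Finset.prod_inv_distrib]
      exact Finset.prod_congr rfl fun x _ => by rw [one_div, inv_pow]]
    rw [← div_eq_mul_inv, div_div]

theorem bernoulli_closed_form_JeongKimSon (n : ℕ) (hn : 1 ≤ n) :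
    bernoulli n = (n.factorial : ℚ) * ∑ j ∈ Finset.Icc 1 n, (-1 : ℚ) ^ j *
      ∑ i : Fin n → Fin (n + 1),
        if (∑ t : Fin n, (i t : ℕ)) = j ∧ (∑ t : Fin n, ((t : ℕ) + 1) * (i t : ℕ)) = n then
          (j.factorial : ℚ) / (∏ t : Fin n, ((i t : ℕ).factorial : ℚ)) /
            (∏ t : Fin n, (((t : ℕ) + 2).factorial : ℚ) ^ (i t : ℕ))
        else 0 := by
  have hfac : ((n.factorial : ℚ)) ≠ 0 := Nat.cast_ne_zero.mpr (Nat.factorial_ne_zero n)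
  have hcoeff : (coeff n) (bernoulliPowerSeries ℚ) = bernoulli n / n.factorial := by
    simp [bernoulliPowerSeries, coeff_mk]
  have key : bernoulli n / (n.factorial : ℚ) =
      ∑ j ∈ Finset.Icc 1 n, (-1 : ℚ) ^ j *
        ∑ i : Fin n → Fin (n + 1),
          if (∑ t : Fin n, (i t : ℕ)) = j ∧ (∑ t : Fin n, ((t : ℕ) + 1) * (i t : ℕ)) = n then
            (j.factorial : ℚ) / (∏ t : Fin n, ((i t : ℕ).factorial : ℚ)) /
              (∏ t : Fin n, (((t : ℕ) + 2).factorial : ℚ) ^ (i t : ℕ))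
          else 0 := by
    rw [← hcoeff, coeff_B_eq n]
    have hzero : (-1:ℚ)^0 * (coeff n) (Fps ^ 0) = 0 := by
      rw [pow_zero, pow_zero, one_mul, coeff_one, if_neg (by omega)]
    rw [Finset.sum_range_succ']
    rw [hzero, add_zero]
    rw [show (∑ j ∈ Finset.Icc 1 n, (-1 : ℚ) ^ j *
        ∑ i : Fin n → Fin (n + 1),
          if (∑ t : Fin n, (i t : ℕ)) = j ∧ (∑ t : Fin n, ((t : ℕ) + 1) * (i t : ℕ)) = n then
            (j.factorial : ℚ) / (∏ t : Fin n, ((i t : ℕ).factorial : ℚ)) /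
              (∏ t : Fin n, (((t : ℕ) + 2).factorial : ℚ) ^ (i t : ℕ))
          else 0) = ∑ t : Fin n, (-1 : ℚ) ^ ((t:ℕ)+1) *
        ∑ i : Fin n → Fin (n + 1),
          if (∑ t : Fin n, (i t : ℕ)) = ((t:ℕ)+1) ∧ (∑ t : Fin n, ((t : ℕ) + 1) * (i t : ℕ)) = n then
            ((((t:ℕ)+1).factorial : ℚ)) / (∏ t : Fin n, ((i t : ℕ).factorial : ℚ)) /
              (∏ t : Fin n, (((t : ℕ) + 2).factorial : ℚ) ^ (i t : ℕ))
          else 0 from sum_Icc_one n _]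
    rw [← Fin.sum_univ_eq_sum_range (fun r => (-1:ℚ)^(r+1) * (coeff n) (Fps ^ (r+1))) n]
    apply Finset.sum_congr rfl
    intro t _
    congr 1
    rw [coeff_Fpow_eq_Tpow, coeff_Tpow, inner_eq]
  rw [← key, mul_div_cancel₀ _ hfac]
end

section
/- For every integer n ≥ 1, the n-th Bernoulli number satisfies B_n = Σ_{i=1}^{n} (-1)^i · (C(n+1, i+1)/C(n+i, i)) · S(n+i, i), where S denotes Stirling numbers of the second kind. -/
/-- Stirling numbers of the second kind, via the standard recurrence. -/
def stirling : ℕ → ℕ → ℕ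
  | 0, 0 => 1
  | 0, _ + 1 => 0
  | _ + 1, 0 => 0
  | n + 1, k + 1 => (k + 1) * stirling n (k + 1) + stirling n k

open PowerSeries Finset
open scoped Nat

/-- EGF of the Stirling numbers of the second kind with `i` blocks. -/
noncomputable def Sgf (i : ℕ) : ℚ⟦X⟧ :=
  PowerSeries.mk fun m => (i ! * stirling m i : ℚ) / m !

lemma coeff_Sgf (i m : ℕ) : coeff m (Sgf i) = (i ! * stirling m i : ℚ) / m ! :=
  coeff_mk _ _

lemma derivative_exp' : d⁄dX ℚ (exp ℚ) = exp ℚ := by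
  ext m
  rw [coeff_derivative, coeff_exp, coeff_exp]
  have h1 : ((m+1)! : ℚ) ≠ 0 := by positivity
  have h2 : (m ! : ℚ) ≠ 0 := by positivity
  simp only [eq_ratCast, Rat.cast_div, Rat.cast_one, Rat.cast_natCast]
  rw [Nat.factorial_succ]
  field_simp
  push_cast
  ring

/-- ODE uniqueness: a solution of `u' = c u` with `u(0) = 0` is zero. -/
lemma ode_zero (c : ℚ) (u : ℚ⟦X⟧) (hd : d⁄dX ℚ u = C c * u)
    (h0 : constantCoeff u = 0) : u = 0 := by
  have h : ∀ m, coeff m u = 0 := by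
    intro m
    induction m with
    | zero => simpa [coeff_zero_eq_constantCoeff] using h0
    | succ m ih =>
      have := congrArg (coeff m) hd
      rw [coeff_derivative, coeff_C_mul, ih, mul_zero] at this
      have hm : ((m : ℚ) + 1) ≠ 0 := by positivity
      exact (mul_eq_zero.mp this).resolve_right hm
  ext m
  simp [h m]

lemma derivative_Sgf (i : ℕ) :
    d⁄dX ℚ (Sgf (i+1)) = C ((i : ℚ) + 1) * (Sgf (i+1) + Sgf i) := by
  ext m
  rw [coeff_derivative, coeff_Sgf, coeff_C_mul, map_add, coeff_Sgf, coeff_Sgf]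
  have h1 : ((m+1)! : ℚ) ≠ 0 := by positivity
  have h2 : (m ! : ℚ) ≠ 0 := by positivity
  rw [show stirling (m+1) (i+1) = (i + 1) * stirling m (i + 1) + stirling m i from rfl,
    Nat.factorial_succ m, Nat.factorial_succ i]
  push_cast
  field_simp

lemma exp_sub_one_pow (i : ℕ) : (exp ℚ - 1) ^ i = Sgf i := by
  induction i with
  | zero =>
    ext m
    cases m with
    | zero => simp [coeff_Sgf, stirling]
    | succ m => simp [coeff_Sgf, stirling, coeff_one]
  | succ i ih =>
    have hd1 : d⁄dX ℚ (exp ℚ - 1) = exp ℚ := by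
      rw [map_sub, derivative_exp', Derivation.map_one_eq_zero, sub_zero]
    have hdp : d⁄dX ℚ ((exp ℚ - 1) ^ (i+1)) =
        C ((i : ℚ) + 1) * ((exp ℚ - 1) ^ (i+1) + (exp ℚ - 1) ^ i) := by
      rw [Derivation.leibniz_pow, hd1]
      simp only [Nat.add_sub_cancel, smul_eq_mul, nsmul_eq_mul]
      rw [map_add, map_natCast, map_one]
      push_cast
      ring
    set u := (exp ℚ - 1) ^ (i+1) - Sgf (i+1) with hu
    have hdu : d⁄dX ℚ u = C ((i : ℚ) + 1) * u := by
      rw [hu, map_sub, hdp, derivative_Sgf, ih]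
      ring
    have h0 : constantCoeff u = 0 := by
      rw [hu, map_sub, map_pow, map_sub, constantCoeff_exp, map_one, sub_self,
        zero_pow (Nat.succ_ne_zero i)]
      have : constantCoeff (Sgf (i+1)) = 0 := by
        rw [← coeff_zero_eq_constantCoeff_apply, coeff_Sgf]
        simp [stirling]
      rw [this, sub_zero]
    have : u = 0 := ode_zero _ _ hdu h0
    rw [hu] at this
    linear_combination (norm := ring_nf) this

/-- `(e^x - 1)/x` as a power series. -/
noncomputable def Gs : ℚ⟦X⟧ := PowerSeries.mk fun m => ((m+1)! : ℚ)⁻¹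

lemma exp_sub_one_eq : exp ℚ - 1 = X * Gs := by
  ext m
  cases m with
  | zero => simp [coeff_exp]
  | succ m =>
    rw [coeff_succ_X_mul, map_sub, coeff_exp, coeff_one]
    simp [Gs, eq_ratCast]

lemma constantCoeff_Gs : constantCoeff Gs = 1 := by
  rw [← coeff_zero_eq_constantCoeff_apply]
  simp [Gs]

lemma bernoulli_mul_Gs : bernoulliPowerSeries ℚ * Gs = 1 := by
  have h := bernoulliPowerSeries_mul_exp_sub_one ℚ
  rw [exp_sub_one_eq] at h
  have : X * (bernoulliPowerSeries ℚ * Gs) = X * 1 := by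
    rw [mul_one, show X * (bernoulliPowerSeries ℚ * Gs) = bernoulliPowerSeries ℚ * (X * Gs) by
      ring, h]
  exact mul_left_cancel₀ X_ne_zero this

theorem bernoulli_closed_form_QiChapman (n : ℕ) (hn : 1 ≤ n) :
    bernoulli n = ∑ i ∈ Finset.Icc 1 n,
      (-1 : ℚ) ^ i * (((n + 1).choose (i + 1) : ℚ) / ((n + i).choose i : ℚ)) *
        (stirling (n + i) i : ℚ) := by
  -- the rational coefficient sequence
  set s : ℕ → ℚ := fun i => (-1 : ℚ) ^ i * ((n + 1).choose (i + 1) : ℚ) *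
    coeff n (Gs ^ i) with hs
  -- step 1: each term of the RHS equals n! * s i
  have hterm : ∀ i ∈ Finset.Icc 1 n,
      (-1 : ℚ) ^ i * (((n + 1).choose (i + 1) : ℚ) / ((n + i).choose i : ℚ)) *
        (stirling (n + i) i : ℚ) = (n ! : ℚ) * s i := by
    intro i _
    have hGi : coeff n (Gs ^ i) = (i ! * stirling (n + i) i : ℚ) / (n + i)! := by
      have h1 : (exp ℚ - 1) ^ i = X ^ i * Gs ^ i := by
        rw [exp_sub_one_eq, mul_pow]
      have h2 := congrArg (coeff (n + i)) h1
      rw [exp_sub_one_pow, coeff_Sgf, coeff_X_pow_mul] at h2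
      rw [← h2]
    rw [hs]
    simp only []
    rw [hGi]
    have hch : ((n + i).choose i : ℚ) = ((n + i)! : ℚ) / (i ! * n !) := by
      rw [Nat.cast_choose ℚ (Nat.le_add_left i n), Nat.add_sub_cancel]
    have f1 : ((n + i)! : ℚ) ≠ 0 := by positivity
    have f2 : (i ! : ℚ) ≠ 0 := by positivity
    have f3 : (n ! : ℚ) ≠ 0 := by positivity
    rw [hch]
    field_simp
  rw [Finset.sum_congr rfl hterm, ← Finset.mul_sum]
  -- step 2: extend the sum to i = 0
  have h0 : s 0 = 0 := by
    rw [hs]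
    simp only [pow_zero, one_mul, pow_zero]
    rw [coeff_one]
    simp [Nat.one_le_iff_ne_zero.mp hn]
  have hins : Finset.Icc 0 n = insert 0 (Finset.Icc 1 n) := by
    ext x; simp only [Finset.mem_Icc, Finset.mem_insert]; omega
  have hsum : ∑ i ∈ Finset.Icc 1 n, s i = ∑ i ∈ Finset.range (n + 1), s i := by
    rw [Finset.range_eq_Ico, Finset.Ico_add_one_right_eq_Icc, hins, Finset.sum_insert (by simp), h0, zero_add]
  rw [hsum]
  -- step 3: the sum is the coefficient of the power series F
  set F : ℚ⟦X⟧ := ∑ i ∈ Finset.range (n + 1),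
    C ((-1 : ℚ) ^ i * ((n + 1).choose (i + 1) : ℚ)) * Gs ^ i with hF
  have hcF : coeff n F = ∑ i ∈ Finset.range (n + 1), s i := by
    rw [hF, map_sum]
    refine Finset.sum_congr rfl fun i _ => ?_
    rw [coeff_C_mul, hs]
  rw [← hcF]
  -- step 4: Gs * F = 1 - (1 - Gs)^(n+1)
  have key : Gs * F = 1 - (1 - Gs) ^ (n + 1) := by
    have hbin : (1 - Gs) ^ (n + 1) =
        ∑ k ∈ Finset.range (n + 2), (-Gs) ^ k * 1 ^ (n + 1 - k) * ((n + 1).choose k) := by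
      rw [sub_eq_add_neg, add_comm, add_pow]
    rw [hbin, Finset.sum_range_succ' _ (n + 1)]
    simp only [pow_zero, one_mul, Nat.choose_zero_right, Nat.cast_one, mul_one]
    rw [hF, Finset.mul_sum]
    have : ∀ i ∈ Finset.range (n + 1),
        Gs * (C ((-1 : ℚ) ^ i * ((n + 1).choose (i + 1) : ℚ)) * Gs ^ i) =
        -((-Gs) ^ (i + 1) * 1 ^ (n + 1 - (i + 1)) * ((n + 1).choose (i + 1))) := by
      intro i _
      rw [show (C ((-1 : ℚ) ^ i * ((n + 1).choose (i + 1) : ℚ))) =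
        (-1 : ℚ⟦X⟧) ^ i * ((n + 1).choose (i + 1) : ℚ⟦X⟧) by
          rw [map_mul, map_pow, map_neg, map_one, map_natCast]]
      rw [one_pow, mul_one, neg_pow]
      ring
    rw [Finset.sum_congr rfl this]
    simp only [one_pow, Finset.sum_neg_distrib]
    ring
  -- step 5: F = B - B * (1-Gs)^(n+1), so coeff n F = bernoulli n / n!
  have hFB : F = bernoulliPowerSeries ℚ - bernoulliPowerSeries ℚ * (1 - Gs) ^ (n + 1) := by
    calc F = (bernoulliPowerSeries ℚ * Gs) * F := by rw [bernoulli_mul_Gs, one_mul]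
    _ = bernoulliPowerSeries ℚ * (Gs * F) := by ring
    _ = bernoulliPowerSeries ℚ * (1 - (1 - Gs) ^ (n + 1)) := by rw [key]
    _ = _ := by ring
  have hvanish : coeff n (bernoulliPowerSeries ℚ * (1 - Gs) ^ (n + 1)) = 0 := by
    have hdvd : (X : ℚ⟦X⟧) ^ (n + 1) ∣ bernoulliPowerSeries ℚ * (1 - Gs) ^ (n + 1) := by
      apply Dvd.dvd.mul_left
      apply pow_dvd_pow_of_dvd
      rw [X_dvd_iff, map_sub, map_one, constantCoeff_Gs, sub_self]
    exact X_pow_dvd_iff.mp hdvd n (by omega)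
  have hcB : coeff n (bernoulliPowerSeries ℚ) = bernoulli n / n ! := by
    rw [bernoulliPowerSeries, coeff_mk]
    exact Algebra.algebraMap_self_apply _
  rw [hFB, map_sub, hvanish, sub_zero, hcB]
  have f3 : (n ! : ℚ) ≠ 0 := by positivity
  field_simp
end

section
/- For every integer n ≥ 1, the Bernoulli polynomial satisfies B_n(u) = Σ_{k=1}^{n} k! Σ_{r+s=k} Σ_{ℓ+m=n} (-1)^m C(n,ℓ) · (ℓ!/(ℓ+r)!) · (m!/(m+s)!) · [Σ_{i=0}^{r} Σ_{j=0}^{s} (-1)^{i+j} C(ℓ+r, r−i) C(m+s, s−j) S(ℓ+i, i) S(m+j, j)] · u^{m+s} (1−u)^{ℓ+r}. -/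
set_option maxRecDepth 4000
set_option maxHeartbeats 1000000

open Finset

lemma neg_pow_sub_succ {j k : ℕ} (h : j ≤ k) :
    (-1 : ℚ) ^ (k + 1 - j) = -(-1 : ℚ) ^ (k - j) := by
  rw [Nat.succ_sub h, pow_succ]
  ring

theorem stirling_formula (n k : ℕ) :
    (k.factorial : ℚ) * stirling n k =
      ∑ j ∈ range (k + 1), (-1 : ℚ) ^ (k - j) * (k.choose j : ℚ) * (j : ℚ) ^ n := by
  induction n generalizing k with
  | zero =>
    cases k with
    | zero => simp [stirling]
    | succ k =>
      have h : ∑ j ∈ range (k + 2), (-1 : ℚ) ^ j * ((k+1).choose j : ℚ) = 0 := by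
        have := Int.alternating_sum_range_choose (n := k + 1)
        rw [if_neg (Nat.succ_ne_zero k)] at this
        have := congrArg (fun z : ℤ => (z : ℚ)) this
        push_cast at this
        simpa using this
      have h2 : ∀ j ∈ range (k + 2),
          (-1 : ℚ) ^ (k + 1 - j) * ((k+1).choose j : ℚ) * (j:ℚ)^0
            = (-1:ℚ)^(k+1) * ((-1:ℚ)^j * ((k+1).choose j : ℚ)) := by
        intro j hj
        rw [mem_range] at hj
        have hjk : j ≤ k + 1 := Nat.lt_succ_iff.mp hj
        have : (-1 : ℚ) ^ (k + 1 - j) * (-1:ℚ)^j = (-1:ℚ)^(k+1) := by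
          rw [← pow_add, Nat.sub_add_cancel hjk]
        have h4 : (-1 : ℚ) ^ (k + 1 - j) = (-1:ℚ)^(k+1) * (-1:ℚ)^j := by
          have hj2 : (-1:ℚ)^j * (-1:ℚ)^j = 1 := by
            rw [← pow_add, ← two_mul, pow_mul]; norm_num
          calc (-1 : ℚ) ^ (k + 1 - j) = (-1 : ℚ) ^ (k + 1 - j) * ((-1:ℚ)^j * (-1:ℚ)^j) := by
                rw [hj2, mul_one]
            _ = (-1:ℚ)^(k+1) * (-1:ℚ)^j := by rw [← mul_assoc, this]
        rw [h4]; ring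
      rw [Finset.sum_congr rfl h2, ← Finset.mul_sum, h]
      simp [stirling]
  | succ n ih =>
    cases k with
    | zero => simp [stirling]
    | succ k =>
      have key : ∀ j ∈ range (k+1),
          (-1:ℚ)^(k+1-(j+1)) * ((k+1).choose (j+1) : ℚ) * ((j+1:ℕ):ℚ)^(n+1)
            = (k+1 : ℚ) * ((-1:ℚ)^(k-j) * (k.choose j : ℚ) * ((j+1:ℕ):ℚ)^n) := by
        intro j hj
        have hc : ((k+1) * k.choose j : ℚ) = ((k+1).choose (j+1) : ℚ) * (j+1 : ℚ) := by
          exact_mod_cast congrArg (Nat.cast (R := ℚ)) (Nat.add_one_mul_choose_eq k j)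
        have : (k+1 : ℕ) - (j+1) = k - j := by omega
        rw [this]
        push_cast at hc ⊢
        linear_combination -(-(1:ℚ))^(k-j) * ((j:ℚ)+1)^n * hc
      rw [Finset.sum_range_succ', Finset.sum_congr rfl key, ← Finset.mul_sum]
      have hS1 := ih (k+1)
      have hS2 := ih k
      have hT : (∑ j ∈ range (k+2), (-1:ℚ)^(k+1-j) * ((k+1).choose j : ℚ) * (j:ℚ)^n)
          + (∑ j ∈ range (k+1), (-1:ℚ)^(k-j) * (k.choose j : ℚ) * (j:ℚ)^n)
          = ∑ j ∈ range (k+1), (-1:ℚ)^(k-j) * (k.choose j : ℚ) * ((j+1:ℕ):ℚ)^n := by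
        rw [Finset.sum_range_succ']
        have pas : ∀ j ∈ range (k+1),
            (-1:ℚ)^(k+1-(j+1)) * ((k+1).choose (j+1) : ℚ) * ((j+1:ℕ):ℚ)^n
              = (-1:ℚ)^(k-j) * (k.choose j : ℚ) * ((j+1:ℕ):ℚ)^n
                + (-1:ℚ)^(k-j) * (k.choose (j+1) : ℚ) * ((j+1:ℕ):ℚ)^n := by
          intro j hj
          have h1 : (k+1) - (j+1) = k - j := by omega
          have h2 : ((k+1).choose (j+1) : ℚ) = (k.choose j : ℚ) + (k.choose (j+1) : ℚ) := by
            exact_mod_cast congrArg (Nat.cast (R := ℚ)) (Nat.choose_succ_succ k j)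
          rw [h1, h2]; ring
        rw [Finset.sum_congr rfl pas, Finset.sum_add_distrib]
        have hW : (∑ j ∈ range (k+1), (-1:ℚ)^(k-j) * (k.choose (j+1) : ℚ) * ((j+1:ℕ):ℚ)^n)
            + (-1:ℚ)^(k+1-0) * ((k+1).choose 0 : ℚ) * ((0:ℕ):ℚ)^n
            = - ∑ j ∈ range (k+1), (-1:ℚ)^(k-j) * (k.choose j : ℚ) * (j:ℚ)^n := by
          have shape : ∀ j ∈ range (k+1),
              (-1:ℚ)^(k-j) * (k.choose (j+1) : ℚ) * ((j+1:ℕ):ℚ)^n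
                = (-1:ℚ)^(k+1-(j+1)) * (k.choose (j+1) : ℚ) * ((j+1:ℕ):ℚ)^n := by
            intro j hj
            have h1 : (k+1) - (j+1) = k - j := by omega
            rw [h1]
          rw [Finset.sum_congr rfl shape]
          have h0 : (-1:ℚ)^(k+1-0) * ((k+1).choose 0 : ℚ) * ((0:ℕ):ℚ)^n
              = (-1:ℚ)^(k+1-0) * (k.choose 0 : ℚ) * ((0:ℕ):ℚ)^n := by norm_num
          rw [h0, ← Finset.sum_range_succ' (fun j => (-1:ℚ)^(k+1-j) * (k.choose j : ℚ) * (j:ℚ)^n) (k+1)]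
          rw [Finset.sum_range_succ]
          have hlast : (-1:ℚ)^(k+1-(k+1)) * (k.choose (k+1) : ℚ) * ((k+1:ℕ):ℚ)^n = 0 := by
            simp [Nat.choose_eq_zero_of_lt (Nat.lt_succ_self k)]
          rw [hlast, add_zero, ← Finset.sum_neg_distrib]
          refine Finset.sum_congr rfl ?_
          intro j hj
          rw [mem_range] at hj
          rw [neg_pow_sub_succ (Nat.lt_succ_iff.mp hj)]
          ring
        linarith [hW]
      have hst : (stirling (n+1) (k+1) : ℚ)
          = (k+1 : ℚ) * (stirling n (k+1) : ℚ) + (stirling n k : ℚ) := by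
        show ((stirling (n+1) (k+1) : ℕ) : ℚ) = _
        rw [show stirling (n+1) (k+1) = (k+1) * stirling n (k+1) + stirling n k from rfl]
        push_cast; ring
      have hfac : ((k+1).factorial : ℚ) = (k+1 : ℚ) * (k.factorial : ℚ) := by
        rw [Nat.factorial_succ]; push_cast; ring
      have hf0 : (-1:ℚ)^(k+1-0) * ((k+1).choose 0 : ℚ) * ((0:ℕ):ℚ)^(n+1) = 0 := by
        norm_num
      rw [hf0, add_zero, hst, hfac]
      calc (k+1:ℚ) * (k.factorial : ℚ) * ((k+1:ℚ) * (stirling n (k+1) : ℚ) + (stirling n k : ℚ))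
          = (k+1:ℚ) * (((k+1).factorial : ℚ) * (stirling n (k+1) : ℚ)
              + (k.factorial : ℚ) * (stirling n k : ℚ)) := by rw [hfac]; ring
        _ = (k+1:ℚ) * ((∑ j ∈ range (k+2), (-1:ℚ)^(k+1-j) * ((k+1).choose j : ℚ) * (j:ℚ)^n)
              + (∑ j ∈ range (k+1), (-1:ℚ)^(k-j) * (k.choose j : ℚ) * (j:ℚ)^n)) := by
            rw [hS1, hS2]
        _ = _ := by rw [hT]

open PowerSeries

lemma neg_pow_sub_eq_add {j k : ℕ} (h : j ≤ k) :
    (-1 : ℚ) ^ (k - j) = (-1 : ℚ) ^ (k + j) := by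
  rw [show k + j = k - j + 2 * j by omega, pow_add, pow_mul]
  norm_num

lemma coeff_exp_sub_one_pow (i N : ℕ) :
    PowerSeries.coeff N ((PowerSeries.exp ℚ - 1) ^ i)
      = (i.factorial : ℚ) * (stirling N i : ℚ) / (N.factorial : ℚ) := by
  rw [sub_pow, map_sum]
  have hterm : ∀ j ∈ range (i + 1),
      PowerSeries.coeff N ((-1 : ℚ⟦X⟧) ^ (j + i) * PowerSeries.exp ℚ ^ j * 1 ^ (i - j)
          * (i.choose j : ℚ⟦X⟧))
        = (-1 : ℚ) ^ (i - j) * (i.choose j : ℚ) * (j : ℚ) ^ N / (N.factorial : ℚ) := by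
    intro j hj
    rw [mem_range] at hj
    have hji : j ≤ i := Nat.lt_succ_iff.mp hj
    rw [one_pow, mul_one, exp_pow_eq_rescale_exp]
    have : ((-1 : ℚ⟦X⟧) ^ (j + i) * rescale (j : ℚ) (PowerSeries.exp ℚ)
          * (i.choose j : ℚ⟦X⟧))
        = PowerSeries.C ((-1 : ℚ) ^ (j+i) * (i.choose j : ℚ)) * rescale (j : ℚ) (PowerSeries.exp ℚ) := by
      simp only [map_mul, map_pow, map_neg, map_one, map_natCast]
      ring
    rw [this, PowerSeries.coeff_C_mul, coeff_rescale, coeff_exp]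
    rw [neg_pow_sub_eq_add hji, show i + j = j + i by omega]
    simp [algebraMap]
    ring
  rw [Finset.sum_congr rfl hterm, ← Finset.sum_div, ← stirling_formula N i]

lemma coeff_a_pow (c : ℚ) (l r : ℕ) :
    PowerSeries.coeff (l + r)
        ((PowerSeries.C c * PowerSeries.X - (rescale c (PowerSeries.exp ℚ) - 1)) ^ r)
      = c ^ (l + r) * ∑ i ∈ range (r + 1),
          (-1 : ℚ) ^ i * (r.choose i : ℚ) * (i.factorial : ℚ) * (stirling (l + i) i : ℚ)
            / ((l + i).factorial : ℚ) := by
  rw [sub_pow, map_sum, Finset.mul_sum,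
    ← Finset.sum_range_reflect (fun i => c ^ (l + r) *
      ((-1 : ℚ) ^ i * (r.choose i : ℚ) * (i.factorial : ℚ) * (stirling (l + i) i : ℚ)
        / ((l + i).factorial : ℚ))) (r + 1)]
  refine Finset.sum_congr rfl ?_
  intro m hm
  rw [mem_range] at hm
  have hmr : m ≤ r := Nat.lt_succ_iff.mp hm
  have hidx : r + 1 - 1 - m = r - m := by omega
  rw [hidx]
  have hresc : rescale c (PowerSeries.exp ℚ) - 1 = rescale c (PowerSeries.exp ℚ - 1) := by
    rw [map_sub, map_one]
  have hps : (-1 : ℚ⟦X⟧) ^ (m + r) * (PowerSeries.C c * PowerSeries.X) ^ m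
        * (rescale c (PowerSeries.exp ℚ) - 1) ^ (r - m) * ((r.choose m : ℕ) : ℚ⟦X⟧)
      = PowerSeries.C ((-1 : ℚ) ^ (m + r) * c ^ m * (r.choose m : ℚ))
          * (PowerSeries.X ^ m * rescale c ((PowerSeries.exp ℚ - 1) ^ (r - m))) := by
    rw [hresc, ← map_pow (rescale c)]
    simp only [mul_pow, map_mul, map_pow, map_neg, map_one, map_natCast]
    ring
  rw [hps, PowerSeries.coeff_C_mul,
    show l + r = l + (r - m) + m by omega,
    PowerSeries.coeff_X_pow_mul, coeff_rescale, coeff_exp_sub_one_pow]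
  have hsign : (-1 : ℚ) ^ (m + r) = (-1 : ℚ) ^ (r - m) := by
    rw [neg_pow_sub_eq_add hmr, show r + m = m + r by omega]
  have hchoose : (r.choose (r - m) : ℚ) = (r.choose m : ℚ) := by
    exact_mod_cast congrArg (Nat.cast (R := ℚ)) (Nat.choose_symm hmr)
  have hc : c ^ m * c ^ (l + (r - m)) = c ^ (l + (r - m) + m) := by
    rw [← pow_add]; ring_nf
  rw [hsign, hchoose]
  field_simp
  ring

lemma fact_ne (m : ℕ) : ((m.factorial : ℚ)) ≠ 0 := by
  exact_mod_cast Nat.factorial_ne_zero m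

lemma choose_cast_eq (a b : ℕ) (h : b ≤ a) :
    (a.choose b : ℚ) = (a.factorial : ℚ) / ((b.factorial : ℚ) * ((a-b).factorial : ℚ)) := by
  rw [eq_div_iff (mul_ne_zero (fact_ne b) (fact_ne (a-b)))]
  exact_mod_cast congrArg (Nat.cast (R := ℚ))
    (by rw [← mul_assoc]; exact Nat.choose_mul_factorial_mul_factorial h)

lemma scalar_step (u : ℚ) (n k l m2 r s i j : ℕ)
    (hlm : l + m2 = n) (hrs : r + s = k) (hi : i ≤ r) (hj : j ≤ s) :
    (n.factorial : ℚ) * ((-1:ℚ)^(r+k) * (k.choose r : ℚ) *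
      ((1-u)^(l+r) * ((-1:ℚ)^i * (r.choose i:ℚ) * (i.factorial:ℚ) * (stirling (l+i) i:ℚ) / ((l+i).factorial:ℚ))) *
      ((-u)^(m2+s) * ((-1:ℚ)^j * (s.choose j:ℚ) * (j.factorial:ℚ) * (stirling (m2+j) j:ℚ) / ((m2+j).factorial:ℚ))))
    = (k.factorial : ℚ) * ((-1:ℚ)^m2 * (n.choose l : ℚ) *
        ((l.factorial:ℚ)/((l+r).factorial:ℚ)) * ((m2.factorial:ℚ)/((m2+s).factorial:ℚ)) *
        ((-1:ℚ)^(i+j) * ((l+r).choose (r-i):ℚ) * ((m2+s).choose (s-j):ℚ) *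
          (stirling (l+i) i:ℚ) * (stirling (m2+j) j:ℚ)) * u^(m2+s) * (1-u)^(l+r)) := by
  have hsgn : (-1:ℚ)^(r+k+i+j+(m2+s)) = (-1:ℚ)^(m2+(i+j)) := by
    rw [show r+k+i+j+(m2+s) = (m2+(i+j)) + 2*(r+s) by omega, pow_add, pow_mul]
    norm_num
  have h1 : (k.choose r : ℚ) = (k.factorial:ℚ) / ((r.factorial:ℚ) * (s.factorial:ℚ)) := by
    rw [choose_cast_eq k r (by omega), show k - r = s by omega]
  have h2 : (r.choose i : ℚ) = (r.factorial:ℚ) / ((i.factorial:ℚ) * ((r-i).factorial:ℚ)) :=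
    choose_cast_eq r i hi
  have h3 : (s.choose j : ℚ) = (s.factorial:ℚ) / ((j.factorial:ℚ) * ((s-j).factorial:ℚ)) :=
    choose_cast_eq s j hj
  have h4 : ((l+r).choose (r-i) : ℚ)
      = ((l+r).factorial:ℚ) / (((r-i).factorial:ℚ) * ((l+i).factorial:ℚ)) := by
    rw [choose_cast_eq (l+r) (r-i) (by omega), show l + r - (r-i) = l + i by omega]
  have h5 : ((m2+s).choose (s-j) : ℚ)
      = ((m2+s).factorial:ℚ) / (((s-j).factorial:ℚ) * ((m2+j).factorial:ℚ)) := by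
    rw [choose_cast_eq (m2+s) (s-j) (by omega), show m2 + s - (s-j) = m2 + j by omega]
  have h6 : (n.choose l : ℚ) = (n.factorial:ℚ) / ((l.factorial:ℚ) * (m2.factorial:ℚ)) := by
    rw [choose_cast_eq n l (by omega), show n - l = m2 by omega]
  rw [neg_pow u (m2+s), h1, h2, h3, h4, h5, h6]
  rw [show (n.factorial : ℚ) * ((-1:ℚ)^(r+k) * ((k.factorial:ℚ) / ((r.factorial:ℚ) * (s.factorial:ℚ))) *
      ((1-u)^(l+r) * ((-1:ℚ)^i * ((r.factorial:ℚ) / ((i.factorial:ℚ) * ((r-i).factorial:ℚ))) * (i.factorial:ℚ) * (stirling (l+i) i:ℚ) / ((l+i).factorial:ℚ))) *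
      ((-1:ℚ)^(m2+s) * u^(m2+s) * ((-1:ℚ)^j * ((s.factorial:ℚ) / ((j.factorial:ℚ) * ((s-j).factorial:ℚ))) * (j.factorial:ℚ) * (stirling (m2+j) j:ℚ) / ((m2+j).factorial:ℚ))))
      = (-1:ℚ)^(r+k+i+j+(m2+s)) * ((n.factorial : ℚ) * ((k.factorial:ℚ) / ((r.factorial:ℚ) * (s.factorial:ℚ))) *
      ((1-u)^(l+r) * (((r.factorial:ℚ) / ((i.factorial:ℚ) * ((r-i).factorial:ℚ))) * (i.factorial:ℚ) * (stirling (l+i) i:ℚ) / ((l+i).factorial:ℚ))) *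
      (u^(m2+s) * (((s.factorial:ℚ) / ((j.factorial:ℚ) * ((s-j).factorial:ℚ))) * (j.factorial:ℚ) * (stirling (m2+j) j:ℚ) / ((m2+j).factorial:ℚ)))) from by ring]
  rw [hsgn]
  field_simp
  ring

noncomputable def Aser (u : ℚ) : ℚ⟦X⟧ :=
  PowerSeries.C (1-u) * PowerSeries.X - (rescale (1-u) (PowerSeries.exp ℚ) - 1)

noncomputable def Bser (u : ℚ) : ℚ⟦X⟧ :=
  PowerSeries.C (-u) * PowerSeries.X - (rescale (-u) (PowerSeries.exp ℚ) - 1)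

lemma key2 (u : ℚ) (n k : ℕ) :
    (n.factorial : ℚ) * PowerSeries.coeff (n + k) ((Aser u - Bser u) ^ k)
      = (k.factorial : ℚ) *
        ∑ rs ∈ Finset.HasAntidiagonal.antidiagonal k, ∑ lm ∈ Finset.HasAntidiagonal.antidiagonal n,
          (-1 : ℚ) ^ lm.2 * (n.choose lm.1 : ℚ) *
            ((lm.1.factorial : ℚ) / ((lm.1 + rs.1).factorial : ℚ)) *
            ((lm.2.factorial : ℚ) / ((lm.2 + rs.2).factorial : ℚ)) *
            (∑ i ∈ Finset.range (rs.1 + 1), ∑ j ∈ Finset.range (rs.2 + 1),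
              (-1 : ℚ) ^ (i + j) * ((lm.1 + rs.1).choose (rs.1 - i) : ℚ) *
                ((lm.2 + rs.2).choose (rs.2 - j) : ℚ) *
                (stirling (lm.1 + i) i : ℚ) * (stirling (lm.2 + j) j : ℚ)) *
            u ^ (lm.2 + rs.2) * (1 - u) ^ (lm.1 + rs.1) := by
  rw [sub_pow, map_sum, Finset.Nat.sum_antidiagonal_eq_sum_range_succ_mk,
    Finset.mul_sum, Finset.mul_sum]
  refine Finset.sum_congr rfl ?_
  intro m hm
  rw [mem_range] at hm
  have hmk : m ≤ k := Nat.lt_succ_iff.mp hm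
  set s := k - m with hs
  have hms : m + s = k := by omega
  have hA0 : constantCoeff (Aser u) = 0 := by
    rw [Aser]
    rw [map_sub, map_mul, constantCoeff_X, mul_zero, zero_sub, map_sub, map_one,
      ← coeff_zero_eq_constantCoeff_apply, coeff_rescale, pow_zero, one_mul,
      coeff_zero_eq_constantCoeff_apply, constantCoeff_exp]
    ring
  have hB0 : constantCoeff (Bser u) = 0 := by
    rw [Bser]
    rw [map_sub, map_mul, constantCoeff_X, mul_zero, zero_sub, map_sub, map_one,
      ← coeff_zero_eq_constantCoeff_apply, coeff_rescale, pow_zero, one_mul,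
      coeff_zero_eq_constantCoeff_apply, constantCoeff_exp]
    ring
  obtain ⟨α, hα⟩ := PowerSeries.X_dvd_iff.mpr hA0
  obtain ⟨β, hβ⟩ := PowerSeries.X_dvd_iff.mpr hB0
  have hps : (-1 : ℚ⟦X⟧) ^ (m + k) * Aser u ^ m * Bser u ^ s * ((k.choose m : ℕ) : ℚ⟦X⟧)
      = PowerSeries.C ((-1 : ℚ) ^ (m + k) * (k.choose m : ℚ))
          * (PowerSeries.X ^ (m + s) * (α ^ m * β ^ s)) := by
    rw [hα, hβ, pow_add]
    simp only [mul_pow, map_mul, map_pow, map_neg, map_one, map_natCast]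
    ring
  rw [hps, PowerSeries.coeff_C_mul, show n + k = n + (m + s) by omega,
    PowerSeries.coeff_X_pow_mul, PowerSeries.coeff_mul]
  have hcα : ∀ l : ℕ, PowerSeries.coeff l (α ^ m)
      = (1-u) ^ (l + m) * ∑ i ∈ range (m + 1),
          (-1 : ℚ) ^ i * (m.choose i : ℚ) * (i.factorial : ℚ) * (stirling (l + i) i : ℚ)
            / ((l + i).factorial : ℚ) := by
    intro l
    have : PowerSeries.coeff l (α ^ m) = PowerSeries.coeff (l + m) (Aser u ^ m) := by
      rw [hα, mul_pow, PowerSeries.coeff_X_pow_mul]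
    rw [this]
    exact coeff_a_pow (1-u) l m
  have hcβ : ∀ l : ℕ, PowerSeries.coeff l (β ^ s)
      = (-u) ^ (l + s) * ∑ j ∈ range (s + 1),
          (-1 : ℚ) ^ j * (s.choose j : ℚ) * (j.factorial : ℚ) * (stirling (l + j) j : ℚ)
            / ((l + j).factorial : ℚ) := by
    intro l
    have : PowerSeries.coeff l (β ^ s) = PowerSeries.coeff (l + s) (Bser u ^ s) := by
      rw [hβ, mul_pow, PowerSeries.coeff_X_pow_mul]
    rw [this]
    exact coeff_a_pow (-u) l s
  simp only [hcα, hcβ]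
  simp only [Finset.mul_sum, Finset.sum_mul]
  refine Finset.sum_congr rfl ?_
  intro lm hlm
  rw [Finset.HasAntidiagonal.mem_antidiagonal] at hlm
  rw [Finset.sum_comm]
  refine Finset.sum_congr rfl ?_
  intro i hi
  rw [mem_range] at hi
  refine Finset.sum_congr rfl ?_
  intro j hj
  rw [mem_range] at hj
  have := scalar_step u n k lm.1 lm.2 m s i j hlm hms (by omega) (by omega)
  linear_combination this

noncomputable def Dser : ℚ⟦X⟧ := PowerSeries.mk fun n => (1:ℚ)/(n+1).factorial

noncomputable def Bber (u : ℚ) : ℚ⟦X⟧ :=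
  PowerSeries.mk fun n => Polynomial.aeval u ((1 / n.factorial : ℚ) • Polynomial.bernoulli n)

noncomputable def wser (u : ℚ) : ℚ⟦X⟧ := 1 - rescale (-u) (PowerSeries.exp ℚ) * Dser

lemma X_mul_Dser : PowerSeries.X * Dser = PowerSeries.exp ℚ - 1 := by
  ext n
  cases n with
  | zero => simp [Dser, algebraMap]
  | succ n =>
    rw [PowerSeries.coeff_succ_X_mul]
    simp [Dser, PowerSeries.coeff_one, Nat.succ_ne_zero, algebraMap]

lemma Bber_mul (u : ℚ) : Bber u * Dser = rescale u (PowerSeries.exp ℚ) := by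
  have h := Polynomial.bernoulli_generating_function u
  have h3 : PowerSeries.X * (Bber u * Dser)
      = PowerSeries.X * rescale u (PowerSeries.exp ℚ) := by
    rw [show PowerSeries.X * (Bber u * Dser) = Bber u * (PowerSeries.X * Dser) by ring,
      X_mul_Dser]
    exact h
  exact mul_left_cancel₀ PowerSeries.X_ne_zero h3

lemma Bber_one_sub_w (u : ℚ) : Bber u * (1 - wser u) = 1 := by
  rw [wser, sub_sub_cancel, ← mul_assoc, mul_comm (Bber u) (rescale (-u) (PowerSeries.exp ℚ)),
    mul_assoc, Bber_mul, exp_mul_exp_eq_exp_add, neg_add_cancel, rescale_zero]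
  simp

lemma Bber_geom (u : ℚ) (K : ℕ) :
    Bber u = (∑ k ∈ range K, wser u ^ k) + Bber u * wser u ^ K := by
  induction K with
  | zero => simp
  | succ K ih =>
    have hB : Bber u = 1 + Bber u * wser u := by
      have := Bber_one_sub_w u
      ring_nf at this ⊢
      linear_combination this
    calc Bber u = (∑ k ∈ range K, wser u ^ k) + Bber u * wser u ^ K := ih
      _ = (∑ k ∈ range K, wser u ^ k) + (1 + Bber u * wser u) * wser u ^ K := by rw [← hB]
      _ = _ := by rw [Finset.sum_range_succ]; ring

lemma wser_const (u : ℚ) : constantCoeff (wser u) = 0 := by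
  rw [wser, map_sub, map_one, map_mul,
    show constantCoeff Dser = 1 by rw [Dser, PowerSeries.constantCoeff_mk]; norm_num,
    ← coeff_zero_eq_constantCoeff_apply, coeff_rescale, pow_zero, one_mul,
    coeff_zero_eq_constantCoeff_apply, constantCoeff_exp]
  ring

lemma X_mul_wser (u : ℚ) : PowerSeries.X * wser u = Aser u - Bser u := by
  have hEE : rescale (-u) (PowerSeries.exp ℚ) * PowerSeries.exp ℚ
      = rescale (1-u) (PowerSeries.exp ℚ) := by
    calc rescale (-u) (PowerSeries.exp ℚ) * PowerSeries.exp ℚ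
        = rescale (-u) (PowerSeries.exp ℚ) * rescale 1 (PowerSeries.exp ℚ) := by
          rw [rescale_one]; rfl
      _ = rescale (-u + 1) (PowerSeries.exp ℚ) := exp_mul_exp_eq_exp_add _ _
      _ = rescale (1-u) (PowerSeries.exp ℚ) := by rw [show -u + 1 = 1 - u by ring]
  have hCX : PowerSeries.C (1-u) * PowerSeries.X - PowerSeries.C (-u) * PowerSeries.X
      = PowerSeries.X := by
    rw [← sub_mul, ← map_sub, show (1 - u) - (-u) = 1 by ring, map_one, one_mul]
  calc PowerSeries.X * wser u
      = PowerSeries.X - rescale (-u) (PowerSeries.exp ℚ) * (PowerSeries.X * Dser) := by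
        rw [wser]; ring
    _ = PowerSeries.X - rescale (-u) (PowerSeries.exp ℚ) * (PowerSeries.exp ℚ - 1) := by
        rw [X_mul_Dser]
    _ = PowerSeries.X - rescale (1-u) (PowerSeries.exp ℚ)
          + rescale (-u) (PowerSeries.exp ℚ) := by rw [← hEE]; ring
    _ = Aser u - Bser u := by rw [Aser, Bser]; linear_combination -hCX

lemma coeff_wser_pow (u : ℚ) (n k : ℕ) :
    PowerSeries.coeff n (wser u ^ k)
      = PowerSeries.coeff (n + k) ((Aser u - Bser u) ^ k) := by
  rw [← X_mul_wser, mul_pow, PowerSeries.coeff_X_pow_mul]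

lemma coeff_tail (u : ℚ) (n : ℕ) :
    PowerSeries.coeff n (Bber u * wser u ^ (n+1)) = 0 := by
  obtain ⟨g, hg⟩ := PowerSeries.X_dvd_iff.mpr (wser_const u)
  have hdvd : (PowerSeries.X : ℚ⟦X⟧) ^ (n+1) ∣ Bber u * wser u ^ (n+1) := by
    refine Dvd.intro (g ^ (n+1) * Bber u) ?_
    rw [hg]; ring
  exact PowerSeries.X_pow_dvd_iff.mp hdvd n (Nat.lt_succ_self n)

theorem bernoulliPoly_closed_form_QiChapman (n : ℕ) (hn : 1 ≤ n) (u : ℚ) :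
    (Polynomial.bernoulli n).eval u =
      ∑ k ∈ Finset.Icc 1 n, (k.factorial : ℚ) *
        ∑ rs ∈ Finset.HasAntidiagonal.antidiagonal k, ∑ lm ∈ Finset.HasAntidiagonal.antidiagonal n,
          (-1 : ℚ) ^ lm.2 * (n.choose lm.1 : ℚ) *
            ((lm.1.factorial : ℚ) / ((lm.1 + rs.1).factorial : ℚ)) *
            ((lm.2.factorial : ℚ) / ((lm.2 + rs.2).factorial : ℚ)) *
            (∑ i ∈ Finset.range (rs.1 + 1), ∑ j ∈ Finset.range (rs.2 + 1),
              (-1 : ℚ) ^ (i + j) * ((lm.1 + rs.1).choose (rs.1 - i) : ℚ) *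
                ((lm.2 + rs.2).choose (rs.2 - j) : ℚ) *
                (stirling (lm.1 + i) i : ℚ) * (stirling (lm.2 + j) j : ℚ)) *
            u ^ (lm.2 + rs.2) * (1 - u) ^ (lm.1 + rs.1) := by
  have hgeo := congrArg (PowerSeries.coeff n) (Bber_geom u (n+1))
  rw [map_add, coeff_tail, add_zero, map_sum] at hgeo
  have hB : PowerSeries.coeff n (Bber u) = (1/n.factorial : ℚ) * (Polynomial.bernoulli n).eval u := by
    rw [Bber, PowerSeries.coeff_mk, map_smul, smul_eq_mul]
    rw [show (Polynomial.aeval u) (Polynomial.bernoulli n) = (Polynomial.bernoulli n).eval u by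
      rw [← Polynomial.coe_aeval_eq_eval]]
  have heval : (Polynomial.bernoulli n).eval u
      = (n.factorial : ℚ) * PowerSeries.coeff n (Bber u) := by
    rw [hB, ← mul_assoc, mul_one_div, div_self (fact_ne n), one_mul]
  rw [heval, hgeo, Finset.mul_sum]
  have hsplit : range (n+1) = insert 0 (Finset.Icc 1 n) := by
    ext x; simp [Finset.mem_Icc]; omega
  rw [hsplit, Finset.sum_insert (by simp)]
  have h0 : (n.factorial:ℚ) * PowerSeries.coeff n (wser u ^ 0) = 0 := by
    rw [pow_zero, PowerSeries.coeff_one, if_neg (by omega)]; ring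
  rw [h0, zero_add]
  refine Finset.sum_congr rfl ?_
  intro k hk
  rw [coeff_wser_pow]
  exact key2 u n k
end

section
/- For every integer n ≥ 1, the Bernoulli polynomial satisfies B_n(u) = (-1)^n times the determinant of the n×n matrix whose (ℓ,m)-entry, for 1 ≤ ℓ ≤ n and 0 ≤ m ≤ n−1, is (1/(ℓ+1)) C(ℓ+1, m) [(1−u)^{ℓ−m+1} − (−u)^{ℓ−m+1}], under the conventions C(0,0)=1 and C(p,q)=0 for q > p ≥ 0. -/
open Finset Polynomial

theorem bern_eval_expand (x : ℚ) (j : ℕ) : (Polynomial.bernoulli j).eval x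
    = ∑ i ∈ range (j + 1), _root_.bernoulli i * (j.choose i : ℚ) * x ^ (j - i) := by
  rw [Polynomial.bernoulli, eval_finset_sum]
  simp [eval_monomial]

theorem bern_add_thm (p : ℕ) (x y : ℚ) :
    ∑ j ∈ range (p + 1), (p.choose j : ℚ) * (Polynomial.bernoulli j).eval x * y ^ (p - j)
      = (Polynomial.bernoulli p).eval (x + y) := by
  calc
    ∑ j ∈ range (p + 1), (p.choose j : ℚ) * (Polynomial.bernoulli j).eval x * y ^ (p - j)
        = ∑ j ∈ Ico 0 (p + 1), ∑ i ∈ Ico 0 (j + 1),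
            (p.choose j : ℚ) * (_root_.bernoulli i * (j.choose i : ℚ) * x ^ (j - i)) * y ^ (p - j) := by
          simp only [← Finset.range_eq_Ico]
          refine sum_congr rfl fun j _ => ?_
          rw [bern_eval_expand, Finset.mul_sum, Finset.sum_mul]
    _ = ∑ i ∈ Ico 0 (p + 1), ∑ j ∈ Ico i (p + 1),
            (p.choose j : ℚ) * (_root_.bernoulli i * (j.choose i : ℚ) * x ^ (j - i)) * y ^ (p - j) := by
          rw [Finset.sum_Ico_Ico_comm]
    _ = ∑ i ∈ range (p + 1), ∑ k ∈ range (p + 1 - i),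
            (p.choose (i + k) : ℚ) * (_root_.bernoulli i * ((i + k).choose i : ℚ) * x ^ k)
              * y ^ (p - (i + k)) := by
          rw [← Finset.range_eq_Ico]
          refine sum_congr rfl fun i _ => ?_
          rw [Finset.sum_Ico_eq_sum_range]
          exact sum_congr rfl fun k _ => by rw [Nat.add_sub_cancel_left]
    _ = ∑ i ∈ range (p + 1), ∑ k ∈ range (p + 1 - i),
            _root_.bernoulli i * (p.choose i : ℚ) * (x ^ k * y ^ (p - i - k) * ((p - i).choose k : ℚ)) := by
          refine sum_congr rfl fun i hi => sum_congr rfl fun k hk => ?_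
          rw [mem_range] at hi hk
          have hik : i + k ≤ p := by omega
          have hc : (p.choose (i + k) : ℚ) * ((i + k).choose i : ℚ)
              = (p.choose i : ℚ) * ((p - i).choose k : ℚ) := by
            rw [← Nat.cast_mul, ← Nat.cast_mul,
              Nat.choose_mul (Nat.le_add_right i k), Nat.add_sub_cancel_left]
          have he : p - (i + k) = p - i - k := by omega
          rw [he]
          calc (p.choose (i + k) : ℚ) * (_root_.bernoulli i * ((i + k).choose i : ℚ) * x ^ k) * y ^ (p - i - k)
              = ((p.choose (i + k) : ℚ) * ((i + k).choose i : ℚ)) * (_root_.bernoulli i * x ^ k * y ^ (p - i - k)) := by ring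
            _ = ((p.choose i : ℚ) * ((p - i).choose k : ℚ)) * (_root_.bernoulli i * x ^ k * y ^ (p - i - k)) := by rw [hc]
            _ = _root_.bernoulli i * (p.choose i : ℚ) * (x ^ k * y ^ (p - i - k) * ((p - i).choose k : ℚ)) := by ring
    _ = (Polynomial.bernoulli p).eval (x + y) := by
          rw [bern_eval_expand]
          refine sum_congr rfl fun i hi => ?_
          rw [mem_range] at hi
          rw [add_pow]
          have : p + 1 - i = (p - i) + 1 := by omega
          rw [this, Finset.mul_sum]

theorem bracket_sum (p : ℕ) (hp : p ≠ 1) (u : ℚ) :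
    ∑ j ∈ range (p + 1), (p.choose j : ℚ) * (Polynomial.bernoulli j).eval u *
      ((1 - u) ^ (p - j) - (-u) ^ (p - j)) = 0 := by
  have h1 := bern_add_thm p u (1 - u)
  have h2 := bern_add_thm p u (-u)
  have e1 : u + (1 - u) = 1 := by ring
  have e2 : u + (-u) = 0 := by ring
  rw [e1] at h1
  rw [e2] at h2
  have : ∑ j ∈ range (p + 1), (p.choose j : ℚ) * (Polynomial.bernoulli j).eval u *
      ((1 - u) ^ (p - j) - (-u) ^ (p - j))
      = (∑ j ∈ range (p + 1), (p.choose j : ℚ) * (Polynomial.bernoulli j).eval u * (1 - u) ^ (p - j))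
        - ∑ j ∈ range (p + 1), (p.choose j : ℚ) * (Polynomial.bernoulli j).eval u * (-u) ^ (p - j) := by
    rw [← Finset.sum_sub_distrib]
    exact sum_congr rfl fun j _ => by ring
  rw [this, h1, h2, Polynomial.bernoulli_eval_one, Polynomial.bernoulli_eval_zero,
    _root_.bernoulli_eq_bernoulli'_of_ne_one hp, sub_self]

theorem row_rel (m : ℕ) (u : ℚ) (i : Fin (m + 1)) :
    ∑ j : Fin (m + 1), (1 / (((i : ℕ) : ℚ) + 2)) * (((i : ℕ) + 2).choose (j : ℕ) : ℚ) *
        ((1 - u) ^ ((i : ℕ) + 2 - (j : ℕ)) - (-u) ^ ((i : ℕ) + 2 - (j : ℕ))) *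
        (Polynomial.bernoulli (j : ℕ)).eval u
      = if (i : ℕ) = m then -(Polynomial.bernoulli (m + 1)).eval u else 0 := by
  set p : ℕ := (i : ℕ) + 2 with hp
  set f : ℕ → ℚ := fun j => (1 / (((i : ℕ) : ℚ) + 2)) * ((p.choose j : ℚ)) *
      ((1 - u) ^ (p - j) - (-u) ^ (p - j)) * (Polynomial.bernoulli j).eval u with hfdef
  have hfin : ∑ j : Fin (m + 1), (1 / (((i : ℕ) : ℚ) + 2)) * ((p.choose (j : ℕ) : ℚ)) *
      ((1 - u) ^ (p - (j : ℕ)) - (-u) ^ (p - (j : ℕ))) * (Polynomial.bernoulli (j : ℕ)).eval u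
      = ∑ j ∈ range (m + 1), f j := Fin.sum_univ_eq_sum_range f (m + 1)
  rw [hfin]
  have hf0 : ∀ j, p ≤ j → f j = 0 := by
    intro j hj
    simp only [hfdef, Nat.sub_eq_zero_of_le hj, pow_zero, sub_self, mul_zero, zero_mul]
  have hptwo : ((p : ℚ)) = ((i : ℕ) : ℚ) + 2 := by push_cast [hp]; ring
  have hpne : (((i : ℕ) : ℚ) + 2) ≠ 0 := by positivity
  have hsum : ∑ j ∈ range (p + 1), f j = 0 := by
    have := bracket_sum p (by omega) u
    calc ∑ j ∈ range (p + 1), f j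
        = (1 / (((i : ℕ) : ℚ) + 2)) * ∑ j ∈ range (p + 1),
            (p.choose j : ℚ) * (Polynomial.bernoulli j).eval u *
            ((1 - u) ^ (p - j) - (-u) ^ (p - j)) := by
          rw [Finset.mul_sum]; exact sum_congr rfl fun j _ => by simp only [hfdef]; ring
      _ = 0 := by rw [this, mul_zero]
  by_cases h : (i : ℕ) = m
  · have hpm : p = m + 2 := by omega
    rw [if_pos h]
    have hstep : ∑ j ∈ range (p + 1), f j
        = (∑ j ∈ range (m + 1), f j) + f (m + 1) + f (m + 2) := by
      rw [hpm]
      rw [Finset.sum_range_succ, Finset.sum_range_succ]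
    have hfm2 : f (m + 2) = 0 := hf0 _ (by omega)
    have hfm1 : f (m + 1) = (Polynomial.bernoulli (m + 1)).eval u := by
      have hc : p.choose (m + 1) = m + 2 := by
        rw [hpm]; exact Nat.choose_succ_self_right (m + 1)
      have he : p - (m + 1) = 1 := by omega
      simp only [hfdef, hc, he, pow_one]
      have : (1 - u) - (-u) = 1 := by ring
      rw [this]
      have hcast : ((m + 2 : ℕ) : ℚ) = ((i : ℕ) : ℚ) + 2 := by rw [h]; push_cast; ring
      rw [hcast]
      field_simp
    rw [hstep, hfm2, hfm1, add_zero] at hsum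
    linarith
  · rw [if_neg h]
    have him : (i : ℕ) < m := by have := i.isLt; omega
    have h1 : ∑ j ∈ range (m + 1), f j = ∑ j ∈ range p, f j := by
      refine (Finset.sum_subset (Finset.range_subset_range.2 (by omega)) ?_).symm
      intro x hx hxn
      rw [Finset.mem_range] at hx
      rw [Finset.mem_range, not_lt] at hxn
      exact hf0 x hxn
    have h2 : ∑ j ∈ range (p + 1), f j = ∑ j ∈ range p, f j := by
      rw [Finset.sum_range_succ, hf0 p le_rfl, add_zero]
    rw [h1, ← h2, hsum]

theorem det_aux (m : ℕ) (u : ℚ) :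
    ((Matrix.of fun i j : Fin (m + 1) =>
        (1 / (((i : ℕ) : ℚ) + 2)) * (((i : ℕ) + 2).choose (j : ℕ) : ℚ) *
          ((1 - u) ^ ((i : ℕ) + 2 - (j : ℕ)) - (-u) ^ ((i : ℕ) + 2 - (j : ℕ)))).updateRow
        (Fin.last m) (Pi.single 0 1)).det = (-1 : ℚ) ^ m := by
  set M : Matrix (Fin (m + 1)) (Fin (m + 1)) ℚ := Matrix.of fun i j : Fin (m + 1) =>
        (1 / (((i : ℕ) : ℚ) + 2)) * (((i : ℕ) + 2).choose (j : ℕ) : ℚ) *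
          ((1 - u) ^ ((i : ℕ) + 2 - (j : ℕ)) - (-u) ^ ((i : ℕ) + 2 - (j : ℕ))) with hM
  set A := M.updateRow (Fin.last m) (Pi.single 0 1) with hA
  set σ : Equiv.Perm (Fin (m + 1)) := (finRotate (m + 1))⁻¹ with hσ
  have hσ0 : σ 0 = Fin.last m := by
    rw [hσ, Equiv.Perm.inv_def, Equiv.symm_apply_eq, finRotate_last]
  have hσs : ∀ k : Fin m, σ (Fin.succ k) = Fin.castSucc k := by
    intro k
    rw [hσ, Equiv.Perm.inv_def, Equiv.symm_apply_eq, finRotate_succ_apply,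
      Fin.coeSucc_eq_succ]
  have hBtri : (A.submatrix σ id).BlockTriangular OrderDual.toDual := by
    intro x y hxy
    have hxy' : x < y := hxy
    simp only [Matrix.submatrix_apply, id_eq]
    rcases Fin.eq_zero_or_eq_succ x with rfl | ⟨k, rfl⟩
    · rw [hσ0, hA, Matrix.updateRow_self, Pi.single_eq_of_ne hxy'.ne']
    · rw [hσs, hA, Matrix.updateRow_ne (Fin.castSucc_lt_last k).ne]
      have hy : (k : ℕ) + 2 ≤ (y : ℕ) := by
        have h5 : ((Fin.succ k : Fin (m+1)) : ℕ) < (y : ℕ) := Fin.lt_iff_val_lt_val.1 hxy'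
        rw [Fin.val_succ] at h5
        omega
      simp only [hM, Matrix.of_apply, Fin.coe_castSucc]
      rw [Nat.sub_eq_zero_of_le hy]
      norm_num
  have hdiag : ∀ x, (A.submatrix σ id) x x = 1 := by
    intro x
    simp only [Matrix.submatrix_apply, id_eq]
    rcases Fin.eq_zero_or_eq_succ x with rfl | ⟨k, rfl⟩
    · rw [hσ0, hA, Matrix.updateRow_self, Pi.single_eq_same]
    · rw [hσs, hA, Matrix.updateRow_ne (Fin.castSucc_lt_last k).ne]
      simp only [hM, Matrix.of_apply, Fin.coe_castSucc, Fin.val_succ]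
      have h1 : (k : ℕ) + 2 - ((k : ℕ) + 1) = 1 := by omega
      have h2 : ((k : ℕ) + 2).choose ((k : ℕ) + 1) = (k : ℕ) + 2 :=
        Nat.choose_succ_self_right ((k : ℕ) + 1)
      rw [h1, h2, pow_one]
      have h4 : (((k : ℕ) : ℚ) + 2) ≠ 0 := by positivity
      push_cast
      field_simp
      ring
  have hdet1 : (A.submatrix σ id).det = 1 := by
    rw [Matrix.det_of_lowerTriangular _ hBtri]
    exact Finset.prod_eq_one fun x _ => hdiag x
  have hperm := Matrix.det_permute σ A
  have hsign : (Equiv.Perm.sign σ : ℚ) = (-1 : ℚ) ^ m := by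
    rw [hσ, Equiv.Perm.sign_inv, sign_finRotate]
    push_cast
    ring
  rw [hdet1, hsign] at hperm
  have hm1 : ((-1 : ℚ) ^ m) * ((-1 : ℚ) ^ m) = 1 := by
    rw [← pow_add, ← two_mul, pow_mul]; norm_num
  calc A.det = ((-1 : ℚ) ^ m * (-1 : ℚ) ^ m) * A.det := by rw [hm1, one_mul]
    _ = (-1 : ℚ) ^ m * ((-1 : ℚ) ^ m * A.det) := by ring
    _ = (-1 : ℚ) ^ m := by rw [← hperm, mul_one]

theorem bernoulliPoly_det_form_QiChapman (n : ℕ) (hn : 1 ≤ n) (u : ℚ) :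
    (Polynomial.bernoulli n).eval u =
      (-1 : ℚ) ^ n * Matrix.det (Matrix.of fun i j : Fin n =>
        (1 / ((i : ℚ) + 2)) * (((i : ℕ) + 2).choose (j : ℕ) : ℚ) *
          ((1 - u) ^ ((i : ℕ) + 2 - (j : ℕ)) - (-u) ^ ((i : ℕ) + 2 - (j : ℕ)))) := by
  obtain ⟨m, rfl⟩ : ∃ m, n = m + 1 := ⟨n - 1, by omega⟩
  set M : Matrix (Fin (m + 1)) (Fin (m + 1)) ℚ := Matrix.of fun i j : Fin (m + 1) =>
      (1 / (((i : ℕ) : ℚ) + 2)) * (((i : ℕ) + 2).choose (j : ℕ) : ℚ) *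
        ((1 - u) ^ ((i : ℕ) + 2 - (j : ℕ)) - (-u) ^ ((i : ℕ) + 2 - (j : ℕ))) with hM
  set v : Fin (m + 1) → ℚ := fun j => (Polynomial.bernoulli (j : ℕ)).eval u with hv
  have hMv : M.mulVec v = Pi.single (Fin.last m) (-(Polynomial.bernoulli (m + 1)).eval u) := by
    funext i
    rw [Matrix.mulVec, dotProduct]
    have hr := row_rel m u i
    simp only [hM, hv, Matrix.of_apply]
    rw [hr, Pi.single_apply]
    congr 1
    simp [Fin.ext_iff]
  have h1 : (M.adjugate).mulVec (M.mulVec v) = M.det • v := by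
    rw [Matrix.mulVec_mulVec, Matrix.adjugate_mul, Matrix.smul_mulVec, Matrix.one_mulVec]
  have h2 := congrFun h1 0
  rw [hMv, Matrix.mulVec_single] at h2
  have hv0 : v 0 = 1 := by
    simp [hv, Polynomial.bernoulli_zero]
  have hadj : M.adjugate 0 (Fin.last m) = (-1 : ℚ) ^ m := by
    rw [Matrix.adjugate_apply]
    exact det_aux m u
  simp only [Pi.smul_apply, Matrix.col_apply, op_smul_eq_mul, hv0, smul_eq_mul, mul_one, hadj] at h2
  have hm1 : ((-1 : ℚ) ^ m) * ((-1 : ℚ) ^ m) = 1 := by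
    rw [← pow_add, ← two_mul, pow_mul]; norm_num
  calc (Polynomial.bernoulli (m + 1)).eval u
      = ((-1 : ℚ) ^ m * (-1 : ℚ) ^ m) * (Polynomial.bernoulli (m + 1)).eval u := by
        rw [hm1, one_mul]
    _ = (-1 : ℚ) ^ (m + 1) * ((-1 : ℚ) ^ m * -(Polynomial.bernoulli (m + 1)).eval u) := by ring
    _ = (-1 : ℚ) ^ (m + 1) * M.det := by rw [h2]
end

section
/- Let z be a complex number with z ≠ 1. For every integer n ≥ 1, the Apostol–Bernoulli polynomial satisfies B_n(u,z) = n · Σ_{k=0}^{n−1} [(-1)^k k!/(z−1)^{k+1}] · Σ_{r+s=k} Σ_{ℓ+m=n−1} (-1)^{s+m} C(n−1, ℓ) z^r (1−u)^ℓ u^m S(ℓ,r) S(m,s), where S denotes Stirling numbers of the second kind. -/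
open PowerSeries Finset

-- geometric telescoping
lemma geom_tel (w : ℂ⟦X⟧) (c : ℂ) (hc : c ≠ 0) (M : ℕ) :
    (C c + w) * ∑ k ∈ Finset.range (M + 1), C ((-1) ^ k / c ^ (k + 1)) * w ^ k
      = 1 - C ((-1) ^ (M + 1) / c ^ (M + 1)) * w ^ (M + 1) := by
  induction M with
  | zero =>
    have h1 : c * ((-1 : ℂ) ^ 0 / c ^ (0 + 1)) = 1 := by field_simp; ring
    have h2 : ((-1 : ℂ) ^ 0 / c ^ (0 + 1)) = -((-1) ^ (0 + 1) / c ^ (0 + 1)) := by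
      field_simp; ring
    rw [Finset.range_one, Finset.sum_singleton, pow_zero w, mul_one, add_mul, ← map_mul, h1,
      map_one, h2, map_neg]
    ring
  | succ M ih =>
    rw [Finset.sum_range_succ, mul_add, ih]
    have key1 : c * ((-1 : ℂ) ^ (M + 1) / c ^ (M + 2)) = (-1) ^ (M + 1) / c ^ (M + 1) := by
      field_simp
      ring
    have key2 : ((-1 : ℂ) ^ (M + 1) / c ^ (M + 2)) = -((-1) ^ (M + 2) / c ^ (M + 2)) := by
      rw [pow_succ (-1 : ℂ) (M + 1)]
      ring
    calc 1 - C ((-1) ^ (M + 1) / c ^ (M + 1)) * w ^ (M + 1) +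
          (C c + w) * (C ((-1) ^ (M + 1) / c ^ (M + 2)) * w ^ (M + 1))
        = 1 - C ((-1) ^ (M + 1) / c ^ (M + 1)) * w ^ (M + 1)
          + C (c * ((-1) ^ (M + 1) / c ^ (M + 2))) * w ^ (M + 1)
          + C ((-1) ^ (M + 1) / c ^ (M + 2)) * w ^ (M + 2) := by
          rw [map_mul]; ring
      _ = 1 - C ((-1) ^ (M + 1 + 1) / c ^ (M + 1 + 1)) * w ^ (M + 1 + 1) := by
          rw [key1, key2, map_neg]; ring_nf


lemma deriv_exp' : d⁄dX ℂ (exp ℂ) = exp ℂ := by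
  ext m
  rw [PowerSeries.coeff_derivative, coeff_exp, coeff_exp, map_div₀, map_div₀, map_one,
    map_natCast, map_natCast, Nat.factorial_succ]
  have h1 : ((m : ℂ) + 1) ≠ 0 := Nat.cast_add_one_ne_zero m
  have h2 : ((m.factorial : ℂ)) ≠ 0 := Nat.cast_ne_zero.2 m.factorial_ne_zero
  push_cast
  field_simp

lemma deriv_exp_sub_one_pow (r : ℕ) :
    d⁄dX ℂ ((exp ℂ - 1) ^ r) =
      C (r : ℂ) * ((exp ℂ - 1) ^ r + (exp ℂ - 1) ^ (r - 1)) := by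
  rw [Derivation.leibniz_pow]
  have h1 : d⁄dX ℂ (exp ℂ - 1) = exp ℂ := by
    rw [map_sub, deriv_exp']; simp
  rw [h1]
  cases r with
  | zero => simp
  | succ r =>
    simp only [smul_eq_mul, Nat.add_sub_cancel]
    have he : exp ℂ = (exp ℂ - 1) + 1 := by ring
    have hc : ((r + 1 : ℕ) : ℂ⟦X⟧) = C ((r + 1 : ℕ) : ℂ) := by
      simp
    rw [nsmul_eq_mul, he, hc]
    push_cast
    ring_nf

lemma coeff_exp_sub_one_pow_s5 (l r : ℕ) :
    (PowerSeries.coeff l) ((exp ℂ - 1) ^ r) =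
      (r.factorial : ℂ) * (stirling l r : ℂ) / (l.factorial : ℂ) := by
  induction l generalizing r with
  | zero =>
    rw [coeff_zero_eq_constantCoeff, map_pow]
    cases r with
    | zero => simp [stirling]
    | succ r => simp [stirling, constantCoeff_exp]
  | succ l ih =>
    have hd := congrArg (PowerSeries.coeff l) (deriv_exp_sub_one_pow r)
    rw [PowerSeries.coeff_derivative, coeff_C_mul, map_add, ih, ih] at hd
    have hl1 : ((l : ℂ) + 1) ≠ 0 := Nat.cast_add_one_ne_zero l
    have hlf : ((l.factorial : ℂ)) ≠ 0 := Nat.cast_ne_zero.2 l.factorial_ne_zero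
    have hlsf : (((l + 1).factorial : ℂ)) = ((l : ℂ) + 1) * (l.factorial : ℂ) := by
      rw [Nat.factorial_succ]; push_cast; ring
    cases r with
    | zero =>
      simp [stirling, coeff_one]
    | succ r =>
      have hs : ((stirling (l + 1) (r + 1) : ℂ)) =
          ((r : ℂ) + 1) * (stirling l (r + 1) : ℂ) + (stirling l r : ℂ) := by
        show ((stirling (l+1) (r+1) : ℕ) : ℂ) = _
        rw [stirling]; push_cast; ring
      have hrf : (((r + 1).factorial : ℂ)) = ((r : ℂ) + 1) * (r.factorial : ℂ) := by
        rw [Nat.factorial_succ]; push_cast; ring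
      have h0 : (PowerSeries.coeff (l+1)) ((exp ℂ - 1) ^ (r+1)) =
          ((r : ℂ) + 1) * ((r+1).factorial * (stirling l (r+1) : ℂ) / l.factorial
            + (r.factorial : ℂ) * (stirling l r : ℂ) / l.factorial) / ((l : ℂ) + 1) := by
        simp only [Nat.add_sub_cancel] at hd
        field_simp at hd ⊢
        push_cast at hd ⊢
        linear_combination hd
      rw [h0, hs, hrf, hlsf]
      simp only [Nat.add_sub_cancel] at *
      field_simp

lemma coeff_A_pow (z u : ℂ) (r l : ℕ) :
    (PowerSeries.coeff l) ((C z * (rescale (1 - u) (exp ℂ) - 1)) ^ r)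
      = z ^ r * (1 - u) ^ l * ((r.factorial : ℂ) * (stirling l r : ℂ) / (l.factorial : ℂ)) := by
  have h1 : rescale (1 - u) (exp ℂ) - 1 = rescale (1 - u) (exp ℂ - 1) := by
    rw [map_sub, map_one]
  rw [h1, mul_pow, ← map_pow, ← map_pow, coeff_C_mul, coeff_rescale, coeff_exp_sub_one_pow_s5]
  ring

lemma coeff_B_pow (u : ℂ) (s m : ℕ) :
    (PowerSeries.coeff m) ((-(rescale (-u) (exp ℂ) - 1)) ^ s)
      = (-1) ^ s * ((-u) ^ m * ((s.factorial : ℂ) * (stirling m s : ℂ) / (m.factorial : ℂ))) := by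
  have h1 : rescale (-u) (exp ℂ) - 1 = rescale (-u) (exp ℂ - 1) := by
    rw [map_sub, map_one]
  have h2 : (-1 : ℂ⟦X⟧) = C (-1) := by rw [map_neg, map_one]
  rw [neg_pow, h1, ← map_pow, h2, ← map_pow, coeff_C_mul, coeff_rescale,
    coeff_exp_sub_one_pow_s5]

lemma coeff_W_pow (z u : ℂ) (N k : ℕ) :
    (PowerSeries.coeff N)
        ((C z * (rescale (1 - u) (exp ℂ) - 1) - (rescale (-u) (exp ℂ) - 1)) ^ k)
      = ∑ rs ∈ Finset.HasAntidiagonal.antidiagonal k, ∑ lm ∈ Finset.HasAntidiagonal.antidiagonal N,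
          (k.choose rs.1 : ℂ) *
            (z ^ rs.1 * (1 - u) ^ lm.1 *
              ((rs.1.factorial : ℂ) * (stirling lm.1 rs.1 : ℂ) / (lm.1.factorial : ℂ))) *
            ((-1) ^ rs.2 * ((-u) ^ lm.2 *
              ((rs.2.factorial : ℂ) * (stirling lm.2 rs.2 : ℂ) / (lm.2.factorial : ℂ)))) := by
  rw [sub_eq_add_neg, (Commute.all _ _).add_pow' k, map_sum]
  apply Finset.sum_congr rfl
  intro rs _
  rw [nsmul_eq_mul]
  have hc : ((k.choose rs.1 : ℕ) : ℂ⟦X⟧) = C (k.choose rs.1 : ℂ) := by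
    simp
  rw [hc, coeff_C_mul, PowerSeries.coeff_mul, Finset.mul_sum]
  apply Finset.sum_congr rfl
  intro lm _
  rw [coeff_A_pow, coeff_B_pow]
  ring

lemma constantCoeff_rescale_exp (a : ℂ) :
    constantCoeff (rescale a (exp ℂ)) = 1 := by
  rw [← coeff_zero_eq_constantCoeff, coeff_rescale, pow_zero, one_mul,
    coeff_zero_eq_constantCoeff, constantCoeff_exp]

lemma main_ps (z u : ℂ) (hz : z ≠ 1) (b : ℕ → ℂ)
    (hrec : (C z * exp ℂ - 1) * PowerSeries.mk b = X * rescale u (exp ℂ)) (N : ℕ) :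
    b (N + 1) = ∑ k ∈ Finset.range (N + 1), (-1) ^ k / (z - 1) ^ (k + 1) *
      (PowerSeries.coeff N)
        ((C z * (rescale (1 - u) (exp ℂ) - 1) - (rescale (-u) (exp ℂ) - 1)) ^ k) := by
  set Ea := rescale (1 - u) (exp ℂ) with hEa
  set Eb := rescale (-u) (exp ℂ) with hEb
  set W : ℂ⟦X⟧ := C z * (Ea - 1) - (Eb - 1) with hW
  set P : ℂ⟦X⟧ := C z * Ea - Eb with hPdef
  have hzne : z - 1 ≠ 0 := sub_ne_zero.mpr hz
  have hPW : P = C (z - 1) + W := by rw [hPdef, hW, map_sub, map_one]; ring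
  have hconst : constantCoeff P = z - 1 := by
    rw [hPdef, map_sub, map_mul, constantCoeff_C, constantCoeff_rescale_exp,
      constantCoeff_rescale_exp, mul_one]
  have hPne : P ≠ 0 := by
    intro h
    rw [h, map_zero] at hconst
    exact hzne hconst.symm
  have hEbE : Eb * exp ℂ = Ea := by
    conv_lhs => rw [show exp ℂ = rescale 1 (exp ℂ) by rw [rescale_one]; rfl]
    rw [hEb, exp_mul_exp_eq_exp_add, hEa, neg_add_eq_sub]
  have hEbEu : rescale u (exp ℂ) * Eb = 1 := by
    rw [hEb, exp_mul_exp_eq_exp_add, add_neg_cancel, rescale_zero]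
    simp [constantCoeff_exp]
  have hP : P * PowerSeries.mk b = X := by
    have h1 : Eb * (C z * exp ℂ - 1) = P := by
      rw [mul_sub, mul_one, show Eb * (C z * exp ℂ) = C z * (Eb * exp ℂ) by ring, hEbE]
    calc P * PowerSeries.mk b = Eb * ((C z * exp ℂ - 1) * PowerSeries.mk b) := by
          rw [← mul_assoc, h1]
      _ = X * (rescale u (exp ℂ) * Eb) := by rw [hrec]; ring
      _ = X := by rw [hEbEu, mul_one]
  have hPinv : P * P⁻¹ = 1 := PowerSeries.mul_inv_cancel _ (by rw [hconst]; exact hzne)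
  have hinv : PowerSeries.mk b = P⁻¹ * X := by
    apply mul_left_cancel₀ hPne
    rw [hP, ← mul_assoc, hPinv, one_mul]
  have hb : b (N + 1) = PowerSeries.coeff N P⁻¹ := by
    have h := congrArg (PowerSeries.coeff (N + 1)) hinv
    rwa [coeff_mk, PowerSeries.coeff_succ_mul_X] at h
  have hgeom := geom_tel W (z - 1) hzne N
  rw [← hPW] at hgeom
  have hSN : ∑ k ∈ Finset.range (N + 1), C ((-1) ^ k / (z - 1) ^ (k + 1)) * W ^ k
      = P⁻¹ - P⁻¹ * (C ((-1) ^ (N + 1) / (z - 1) ^ (N + 1)) * W ^ (N + 1)) := by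
    apply mul_left_cancel₀ hPne
    rw [mul_sub, ← mul_assoc, hPinv, one_mul]
    exact hgeom
  have hW0 : constantCoeff W = 0 := by
    rw [hW]
    simp only [map_sub, map_mul, constantCoeff_C, map_one]
    rw [show constantCoeff Ea = 1 from constantCoeff_rescale_exp _,
      show constantCoeff Eb = 1 from constantCoeff_rescale_exp _]
    ring
  have hzero : (PowerSeries.coeff N)
      (P⁻¹ * (C ((-1) ^ (N + 1) / (z - 1) ^ (N + 1)) * W ^ (N + 1))) = 0 := by
    have hdvd : (X : ℂ⟦X⟧) ^ (N + 1) ∣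
        P⁻¹ * (C ((-1) ^ (N + 1) / (z - 1) ^ (N + 1)) * W ^ (N + 1)) := by
      refine Dvd.dvd.trans (pow_dvd_pow_of_dvd (PowerSeries.X_dvd_iff.mpr hW0) (N + 1)) ?_
      exact (dvd_mul_left _ _).trans (dvd_mul_left _ _)
    exact (PowerSeries.X_pow_dvd_iff.mp hdvd) N (Nat.lt_succ_self N)
  rw [hb]
  have hc := congrArg (PowerSeries.coeff N) hSN
  rw [map_sub, map_sum, hzero, sub_zero] at hc
  rw [← hc]
  exact Finset.sum_congr rfl fun k _ => by rw [coeff_C_mul]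

open Filter FormalMultilinearSeries in

lemma hasFPowerSeriesAt_of_eventually {a : ℕ → ℂ} {f : ℂ → ℂ}
    (h : ∀ᶠ x in nhds 0, HasSum (fun m => a m * x ^ m) (f x)) :
    HasFPowerSeriesAt f (ofScalars ℂ a) 0 := by
  obtain ⟨ε, hε, hball⟩ := Metric.eventually_nhds_iff.mp h
  set x₀ : ℂ := ((3 * ε / 4 : ℝ) : ℂ) with hx₀def
  have hx₀ : dist x₀ 0 < ε := by
    simp only [dist_zero_right, hx₀def, Complex.norm_real, Real.norm_eq_abs]
    rw [abs_of_nonneg (by linarith)]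
    linarith
  have hsum₀ := hball hx₀
  obtain ⟨C, hC⟩ : BddAbove (Set.range fun m => ‖a m * x₀ ^ m‖) :=
    (hsum₀.summable.tendsto_atTop_zero.norm).bddAbove_range
  have hnorm : ∀ m, ‖a m‖ * (3 * ε / 4) ^ m ≤ C := by
    intro m
    have := hC (Set.mem_range_self m)
    rwa [norm_mul, norm_pow, hx₀def, Complex.norm_real,
      Real.norm_of_nonneg (by linarith)] at this
  refine ⟨ENNReal.ofReal (ε / 2), ?_, ?_, ?_⟩
  · calc ENNReal.ofReal (ε / 2)
        ≤ ((Real.toNNReal (3 * ε / 4) : NNReal) : ENNReal) := by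
          rw [ENNReal.ofReal, ENNReal.coe_le_coe]
          exact Real.toNNReal_le_toNNReal (by linarith)
      _ ≤ (ofScalars ℂ a).radius := by
          apply le_radius_of_bound _ C
          intro m
          rw [Real.coe_toNNReal _ (by linarith : (0:ℝ) ≤ 3 * ε / 4), ofScalars_norm]
          exact hnorm m
  · simp only [gt_iff_lt, ENNReal.ofReal_pos]; linarith
  · intro y hy
    rw [EMetric.mem_ball, edist_zero_right, ← ofReal_norm,
      ENNReal.ofReal_lt_ofReal_iff (by linarith)] at hy
    have h1 := hball (show dist y 0 < ε by simp only [dist_zero_right]; linarith)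
    have h2 : (fun n => (ofScalars ℂ a n) fun _ => y) = fun m => a m * y ^ m := by
      funext m; rw [ofScalars_apply_eq, smul_eq_mul]
    rw [h2, zero_add]
    exact h1

open Filter FormalMultilinearSeries in
lemma series_unique {a b : ℕ → ℂ} {f : ℂ → ℂ}
    (ha : ∀ᶠ x in nhds 0, HasSum (fun m => a m * x ^ m) (f x))
    (hb : ∀ᶠ x in nhds 0, HasSum (fun m => b m * x ^ m) (f x)) : a = b := by
  have := (hasFPowerSeriesAt_of_eventually ha).eq_formalMultilinearSeries
    (hasFPowerSeriesAt_of_eventually hb)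
  exact ofScalars_series_injective (𝕜 := ℂ) (E := ℂ) this

lemma hexp (y : ℂ) : HasSum (fun n => y ^ n / (n.factorial : ℂ)) (Complex.exp y) := by
  rw [Complex.exp_eq_exp_ℂ]
  exact NormedSpace.expSeries_div_hasSum_exp y

lemma hrec_of_hB (z u : ℂ) (hz : z ≠ 1) (B : ℕ → ℂ → ℂ)
    (hB : ∀ᶠ x : ℂ in nhds 0,
      HasSum (fun m : ℕ => B m u * x ^ m / (m.factorial : ℂ))
        (x * Complex.exp (u * x) / (z * Complex.exp x - 1))) :
    (C z * exp ℂ - 1) * PowerSeries.mk (fun j => B j u / (j.factorial : ℂ))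
      = X * rescale u (exp ℂ) := by
  set b : ℕ → ℂ := fun j => B j u / (j.factorial : ℂ) with hbdef
  set d : ℕ → ℂ := fun m => Nat.rec 0 (fun m _ => u ^ m / (m.factorial : ℂ)) m with hddef
  set c : ℕ → ℂ := fun m =>
    z * (∑ ij ∈ Finset.HasAntidiagonal.antidiagonal m, ((ij.1.factorial : ℂ))⁻¹ * b ij.2) - b m with hcdef
  -- the B-series in terms of b
  have hB' : ∀ᶠ x : ℂ in nhds 0,
      HasSum (fun m : ℕ => b m * x ^ m)
        (x * Complex.exp (u * x) / (z * Complex.exp x - 1)) := by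
    filter_upwards [hB] with x hx
    have : (fun m : ℕ => b m * x ^ m) = fun m : ℕ => B m u * x ^ m / (m.factorial : ℂ) := by
      funext m
      rw [hbdef]
      ring
    rw [this]
    exact hx
  -- d-series sums to x * exp (u x)
  have h2 : ∀ x : ℂ, HasSum (fun m => d m * x ^ m) (x * Complex.exp (u * x)) := by
    intro x
    have h := (hexp (u * x)).mul_left x
    refine (hasSum_nat_add_iff' 1).mp ?_
    have hfun : (fun n : ℕ => d (n + 1) * x ^ (n + 1))
        = fun n : ℕ => x * ((u * x) ^ n / (n.factorial : ℂ)) := by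
      funext n
      show u ^ n / (n.factorial : ℂ) * x ^ (n + 1) = _
      rw [mul_pow, pow_succ]
      ring
    rw [hfun]
    have hsum0 : ∑ i ∈ Finset.range 1, d i * x ^ i = 0 := by
      simp [hddef]
    rw [hsum0, sub_zero]
    exact h
  -- summability of the b-series near 0
  have hsmall : ∀ᶠ x : ℂ in nhds 0, Summable fun m => ‖b m * x ^ m‖ := by
    obtain ⟨ε, hε, hball⟩ := Metric.eventually_nhds_iff.mp hB'
    set x₀ : ℂ := ((ε / 2 : ℝ) : ℂ) with hx₀def
    have hx₀ : dist x₀ 0 < ε := by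
      simp only [dist_zero_right, hx₀def, Complex.norm_real, Real.norm_eq_abs]
      rw [abs_of_nonneg (by linarith)]
      linarith
    obtain ⟨Cb, hCb⟩ : BddAbove (Set.range fun m => ‖b m * x₀ ^ m‖) :=
      ((hball hx₀).summable.tendsto_atTop_zero.norm).bddAbove_range
    have hnorm : ∀ m, ‖b m‖ * (ε / 2) ^ m ≤ Cb := by
      intro m
      have := hCb (Set.mem_range_self m)
      rwa [norm_mul, norm_pow, hx₀def, Complex.norm_real,
        Real.norm_of_nonneg (by linarith)] at this
    rw [Metric.eventually_nhds_iff]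
    refine ⟨ε / 4, by linarith, fun y hy => ?_⟩
    rw [dist_zero_right] at hy
    have hterm : ∀ m, ‖b m * y ^ m‖ ≤ Cb * (1 / 2 : ℝ) ^ m := by
      intro m
      rw [norm_mul, norm_pow]
      calc ‖b m‖ * ‖y‖ ^ m ≤ ‖b m‖ * (ε / 4) ^ m := by
            apply mul_le_mul_of_nonneg_left _ (norm_nonneg _)
            exact pow_le_pow_left₀ (norm_nonneg _) (le_of_lt hy) m
        _ = ‖b m‖ * (ε / 2) ^ m * (1 / 2 : ℝ) ^ m := by
            rw [show (ε / 4 : ℝ) = ε / 2 * (1 / 2) by ring, mul_pow, mul_assoc]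
        _ ≤ Cb * (1 / 2 : ℝ) ^ m := by
            apply mul_le_mul_of_nonneg_right (hnorm m)
            positivity
    apply Summable.of_nonneg_of_le (fun m => norm_nonneg _) hterm
    exact (summable_geometric_of_lt_one (by norm_num) (by norm_num)).mul_left Cb
  -- nonvanishing of denominator near 0
  have hne : ∀ᶠ x : ℂ in nhds 0, z * Complex.exp x - 1 ≠ 0 := by
    have hcont : ContinuousAt (fun x : ℂ => z * Complex.exp x - 1) 0 := by fun_prop
    have hval : (fun x : ℂ => z * Complex.exp x - 1) 0 ≠ 0 := by
      simp only [Complex.exp_zero, mul_one]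
      exact sub_ne_zero.mpr hz
    exact hcont.eventually_ne hval
  -- the product series
  have h1 : ∀ᶠ x : ℂ in nhds 0, HasSum (fun m => c m * x ^ m) (x * Complex.exp (u * x)) := by
    filter_upwards [hB', hne, hsmall] with x hx hxne hxs
    have hf1 : HasSum (fun i : ℕ => z * (x ^ i / (i.factorial : ℂ))) (z * Complex.exp x) :=
      (hexp x).mul_left z
    have hsf1 : Summable fun i : ℕ => ‖z * (x ^ i / (i.factorial : ℂ))‖ := by
      have : (fun i : ℕ => ‖z * (x ^ i / (i.factorial : ℂ))‖)
          = fun i : ℕ => ‖z‖ * (‖x‖ ^ i / (i.factorial : ℝ)) := by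
        funext i
        rw [norm_mul, norm_div, norm_pow]
        norm_num
      rw [this]
      exact (Real.summable_pow_div_factorial ‖x‖).mul_left ‖z‖
    have hprod := tsum_mul_tsum_eq_tsum_sum_antidiagonal_of_summable_norm hsf1 hxs
    have hsummable : Summable fun n : ℕ => ∑ kl ∈ Finset.HasAntidiagonal.antidiagonal n,
        (z * (x ^ kl.1 / (kl.1.factorial : ℂ))) * (b kl.2 * x ^ kl.2) :=
      (summable_norm_sum_mul_antidiagonal_of_summable_norm hsf1 hxs).of_norm
    have hS : HasSum (fun n : ℕ => ∑ kl ∈ Finset.HasAntidiagonal.antidiagonal n,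
        (z * (x ^ kl.1 / (kl.1.factorial : ℂ))) * (b kl.2 * x ^ kl.2))
        ((z * Complex.exp x) * (x * Complex.exp (u * x) / (z * Complex.exp x - 1))) := by
      have h := hsummable.hasSum
      rwa [← hprod, hf1.tsum_eq, hx.tsum_eq] at h
    have hSc := hS.sub hx
    have hfun : (fun n : ℕ => (∑ kl ∈ Finset.HasAntidiagonal.antidiagonal n,
        (z * (x ^ kl.1 / (kl.1.factorial : ℂ))) * (b kl.2 * x ^ kl.2)) - b n * x ^ n)
        = fun n : ℕ => c n * x ^ n := by
      funext n
      rw [hcdef]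
      simp only [sub_mul]
      congr 1
      rw [Finset.mul_sum, Finset.sum_mul]
      apply Finset.sum_congr rfl
      intro kl hkl
      have hklsum : kl.1 + kl.2 = n := Finset.HasAntidiagonal.mem_antidiagonal.mp hkl
      rw [← hklsum, pow_add]
      field_simp
    have hval : (z * Complex.exp x) * (x * Complex.exp (u * x) / (z * Complex.exp x - 1))
        - x * Complex.exp (u * x) / (z * Complex.exp x - 1) = x * Complex.exp (u * x) := by
      field_simp
    rw [hfun, hval] at hSc
    exact hSc
  -- uniqueness of coefficients
  have hcd : c = d := series_unique h1 (Filter.Eventually.of_forall h2)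
  -- conclude the power series identity
  have hL : ∀ m, PowerSeries.coeff m ((C z * exp ℂ - 1) * PowerSeries.mk b) = c m := by
    intro m
    rw [sub_mul, one_mul, map_sub, PowerSeries.coeff_mul, coeff_mk, hcdef]
    congr 1
    rw [Finset.mul_sum]
    apply Finset.sum_congr rfl
    intro ij _
    rw [coeff_C_mul, coeff_exp, coeff_mk, map_div₀, map_one, map_natCast]
    ring
  have hR : ∀ m, PowerSeries.coeff m (X * rescale u (exp ℂ)) = d m := by
    intro m
    cases m with
    | zero => rw [coeff_zero_X_mul]; rfl
    | succ m =>
      rw [PowerSeries.coeff_succ_X_mul, coeff_rescale, coeff_exp, map_div₀, map_one, map_natCast]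
      show _ = u ^ m / (m.factorial : ℂ)
      rw [mul_one_div]
  ext m
  rw [hL m, hR m]
  exact congrFun hcd m

theorem apostolBernoulli_closed_form (z : ℂ) (hz : z ≠ 1) (B : ℕ → ℂ → ℂ)
    (hB : ∀ u : ℂ, ∀ᶠ x : ℂ in nhds 0,
      HasSum (fun m : ℕ => B m u * x ^ m / (m.factorial : ℂ))
        (x * Complex.exp (u * x) / (z * Complex.exp x - 1)))
    (n : ℕ) (hn : 1 ≤ n) (u : ℂ) :
    B n u = (n : ℂ) * ∑ k ∈ Finset.range n,
      ((-1 : ℂ) ^ k * (k.factorial : ℂ) / (z - 1) ^ (k + 1)) *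
        ∑ rs ∈ Finset.HasAntidiagonal.antidiagonal k, ∑ lm ∈ Finset.HasAntidiagonal.antidiagonal (n - 1),
          (-1 : ℂ) ^ (rs.2 + lm.2) * ((n - 1).choose lm.1 : ℂ) *
            z ^ rs.1 * (1 - u) ^ lm.1 * u ^ lm.2 *
            (stirling lm.1 rs.1 : ℂ) * (stirling lm.2 rs.2 : ℂ) := by
  obtain ⟨N, rfl⟩ : ∃ N, n = N + 1 := ⟨n - 1, (Nat.succ_pred_eq_of_pos hn).symm⟩
  have hrec := hrec_of_hB z u hz B (hB u)
  have hbn := main_ps z u hz (fun j => B j u / (j.factorial : ℂ)) hrec N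
  simp only [Nat.succ_sub_one] at *
  have hfac : ((N + 1).factorial : ℂ) ≠ 0 := Nat.cast_ne_zero.mpr (N + 1).factorial_ne_zero
  have hBval : B (N + 1) u = ((N + 1).factorial : ℂ) *
      ∑ k ∈ Finset.range (N + 1), (-1) ^ k / (z - 1) ^ (k + 1) *
        (PowerSeries.coeff N)
          ((PowerSeries.C z * (PowerSeries.rescale (1 - u) (PowerSeries.exp ℂ) - 1) -
            (PowerSeries.rescale (-u) (PowerSeries.exp ℂ) - 1)) ^ k) := by
    rw [← hbn]
    field_simp
  rw [hBval]
  rw [Finset.mul_sum, Finset.mul_sum]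
  apply Finset.sum_congr rfl
  intro k hk
  rw [coeff_W_pow]
  rw [Finset.mul_sum, Finset.mul_sum, Finset.mul_sum, Finset.mul_sum]
  apply Finset.sum_congr rfl
  intro rs hrs
  rw [Finset.mul_sum, Finset.mul_sum, Finset.mul_sum, Finset.mul_sum]
  apply Finset.sum_congr rfl
  intro lm hlm
  have hrsk : rs.1 + rs.2 = k := Finset.HasAntidiagonal.mem_antidiagonal.mp hrs
  have hlmN : lm.1 + lm.2 = N := Finset.HasAntidiagonal.mem_antidiagonal.mp hlm
  have h1 : ((k.choose rs.1 : ℕ) : ℂ) * (rs.1.factorial : ℂ) * (rs.2.factorial : ℂ)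
      = (k.factorial : ℂ) := by
    have := Nat.choose_mul_factorial_mul_factorial
      (show rs.1 ≤ k from hrsk ▸ Nat.le_add_right _ _)
    rw [show k - rs.1 = rs.2 from by omega] at this
    exact_mod_cast congrArg (Nat.cast (R := ℂ)) this
  have h2 : ((N.choose lm.1 : ℕ) : ℂ) * (lm.1.factorial : ℂ) * (lm.2.factorial : ℂ)
      = (N.factorial : ℂ) := by
    have := Nat.choose_mul_factorial_mul_factorial
      (show lm.1 ≤ N from hlmN ▸ Nat.le_add_right _ _)
    rw [show N - lm.1 = lm.2 from by omega] at this
    exact_mod_cast congrArg (Nat.cast (R := ℂ)) this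
  have h3 : (((N + 1).factorial : ℕ) : ℂ) = ((N : ℂ) + 1) * (N.factorial : ℂ) := by
    rw [Nat.factorial_succ]; push_cast; ring
  have hl : (lm.1.factorial : ℂ) ≠ 0 := Nat.cast_ne_zero.mpr lm.1.factorial_ne_zero
  have hm : (lm.2.factorial : ℂ) ≠ 0 := Nat.cast_ne_zero.mpr lm.2.factorial_ne_zero
  have hz1 : (z - 1) ≠ 0 := sub_ne_zero.mpr hz
  have hzk : (z - 1) ^ (k + 1) ≠ 0 := pow_ne_zero _ hz1
  have hneg : (-u) ^ lm.2 = (-1 : ℂ) ^ lm.2 * u ^ lm.2 := by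
    rw [neg_pow]
  have hcast : ((N : ℕ) + 1 : ℕ) = N + 1 := rfl
  push_cast [h3]
  rw [hneg]
  field_simp
  linear_combination ((-1) ^ rs.2 * (-1) ^ lm.2 * z ^ rs.1 *
      (1 - u) ^ lm.1 * u ^ lm.2 * (stirling lm.1 rs.1 : ℂ) * (stirling lm.2 rs.2 : ℂ)) *
    ((N.factorial : ℂ) * h1 - (k.factorial : ℂ) * h2)
end

section
/- Let z be a complex number with z ≠ 1. For every integer n ≥ 1, the Apostol–Bernoulli number satisfies B_n(z) = (-1)^{n−1} n Σ_{k=1}^{n} ((k−1)!/(z−1)^k) S(n,k), where S denotes Stirling numbers of the second kind. -/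
lemma stirling_succ_succ' (n k : ℕ) :
    stirling (n + 1) (k + 1) = (k + 1) * stirling n (k + 1) + stirling n k := rfl

lemma stirling_eq_zero_of_lt' : ∀ {n k : ℕ}, n < k → stirling n k = 0 := by
  intro n
  induction n with
  | zero => intro k hk; match k, hk with | k + 1, _ => rfl
  | succ n ih =>
    intro k hk
    match k, hk with
    | k + 1, hk =>
      rw [stirling_succ_succ', ih (by omega), ih (by omega)]
      simp

lemma binom_stirling' (n k : ℕ) :
    ∑ i ∈ Finset.range (n + 1), n.choose i * stirling i k = stirling (n + 1) (k + 1) := by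
  induction n generalizing k with
  | zero => cases k <;> simp [stirling_succ_succ'] <;> rfl
  | succ n ih =>
    rw [Finset.sum_range_succ']
    have key : ∑ i ∈ Finset.range (n + 1), (n + 1).choose (i + 1) * stirling (i + 1) k
        = ∑ i ∈ Finset.range (n + 1), n.choose i * stirling (i + 1) k
          + ∑ i ∈ Finset.range (n + 1), n.choose (i + 1) * stirling (i + 1) k := by
      rw [← Finset.sum_add_distrib]
      exact Finset.sum_congr rfl fun i _ => by rw [Nat.choose_succ_succ n i, add_mul]
    rw [key]
    have h2 : ∑ i ∈ Finset.range (n + 1), n.choose (i + 1) * stirling (i + 1) k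
        + (n + 1).choose 0 * stirling 0 k
        = ∑ i ∈ Finset.range (n + 1), n.choose i * stirling i k := by
      have h0 : (n + 1).choose 0 * stirling 0 k = n.choose 0 * stirling 0 k := by simp
      have e := Finset.sum_range_succ' (fun i => n.choose i * stirling i k) (n + 1)
      rw [h0, ← e, Finset.sum_range_succ, Nat.choose_succ_self, zero_mul, add_zero]
    have h3 : ∑ i ∈ Finset.range (n + 1), n.choose i * stirling (i + 1) k
        = k * stirling (n + 1) (k + 1) + stirling (n + 1) k := by
      cases k with
      | zero => simp [show ∀ m, stirling (m + 1) 0 = 0 from fun _ => rfl]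
      | succ k =>
        have hpt : ∀ i ∈ Finset.range (n + 1), n.choose i * stirling (i + 1) (k + 1)
            = (k + 1) * (n.choose i * stirling i (k + 1)) + n.choose i * stirling i k := by
          intro i _
          rw [stirling_succ_succ']; ring
        rw [Finset.sum_congr rfl hpt, Finset.sum_add_distrib, ← Finset.mul_sum, ih, ih]
    rw [add_assoc, h2, h3, ih, stirling_succ_succ' (n + 1) k]
    ring

open Finset in
lemma expSumAux : ∀ (k : ℕ) (y : ℂ),
    HasSum (fun m => ((k.factorial * stirling m k : ℕ) : ℂ) * y ^ m / m.factorial)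
      ((Complex.exp y - 1) ^ k) := by
  intro k
  induction k with
  | zero =>
    intro y
    have h := hasSum_single (f := fun m =>
        ((Nat.factorial 0 * stirling m 0 : ℕ) : ℂ) * y ^ m / m.factorial) 0 ?_
    · simpa [show stirling 0 0 = 1 from rfl] using h
    · intro m hm
      match m, hm with
      | m + 1, _ => simp [show stirling (m+1) 0 = 0 from rfl]
  | succ k ih =>
    intro y
    set f : ℕ → ℂ := fun m => ((k.factorial * stirling m k : ℕ) : ℂ) * y ^ m / m.factorial with hf
    set g : ℕ → ℂ := fun m => y ^ m / m.factorial with hg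
    have hfS : HasSum f ((Complex.exp y - 1) ^ k) := ih y
    have hgS : HasSum g (Complex.exp y) := by
      rw [Complex.exp_eq_exp_ℂ]
      exact NormedSpace.expSeries_div_hasSum_exp y
    have hfn : Summable fun m => ‖f m‖ := by
      have h1 : HasSum (fun m => ((k.factorial * stirling m k : ℕ) : ℂ) * (‖y‖ : ℂ) ^ m
          / m.factorial) ((Complex.exp ‖y‖ - 1) ^ k) := ih _
      have h2 : Summable fun m => ((k.factorial * stirling m k : ℝ) * ‖y‖ ^ m / m.factorial) := by
        rw [← Complex.summable_ofReal]
        convert h1.summable using 2 with m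
        push_cast
        ring
      apply h2.congr
      intro m
      simp [hf, norm_div, norm_mul, abs_of_nonneg, Nat.cast_mul]
    have hgn : Summable fun m => ‖g m‖ := by
      have := Real.summable_pow_div_factorial ‖y‖
      apply this.congr
      intro m
      simp [hg, norm_div]
    have hCP := hasSum_sum_range_mul_of_summable_norm hfn hgn
    rw [hfS.tsum_eq, hgS.tsum_eq] at hCP
    have hSub := hCP.sub hfS
    have hval : (Complex.exp y - 1) ^ k * Complex.exp y - (Complex.exp y - 1) ^ k
        = (Complex.exp y - 1) ^ (k + 1) := by ring
    rw [hval] at hSub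
    apply hSub.congr_fun
    intro m
    have hterm : ∀ i ∈ range (m + 1), f i * g (m - i)
        = ((m.choose i * (k.factorial * stirling i k) : ℕ) : ℂ) * y ^ m / m.factorial := by
      intro i hi
      have hi' : i ≤ m := by simpa [Nat.lt_succ_iff] using hi
      have hy : y ^ i * y ^ (m - i) = y ^ m := by
        rw [← pow_add]; congr 1; omega
      have h1 : (i.factorial : ℂ) ≠ 0 := Nat.cast_ne_zero.mpr i.factorial_ne_zero
      have h2 : ((m - i).factorial : ℂ) ≠ 0 := Nat.cast_ne_zero.mpr (m - i).factorial_ne_zero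
      have h3 : (m.factorial : ℂ) ≠ 0 := Nat.cast_ne_zero.mpr m.factorial_ne_zero
      rw [Nat.cast_mul, Nat.cast_choose ℂ hi']
      simp only [hf, hg]
      field_simp
      linear_combination ((k.factorial * stirling i k : ℕ) : ℂ) * hy
    have hnat : ∑ i ∈ range (m + 1), m.choose i * (k.factorial * stirling i k)
        = (k+1).factorial * stirling m (k+1) + k.factorial * stirling m k := by
      have h := binom_stirling' m k
      calc ∑ i ∈ range (m + 1), m.choose i * (k.factorial * stirling i k)
          = k.factorial * ∑ i ∈ range (m + 1), m.choose i * stirling i k := by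
            rw [Finset.mul_sum]; exact Finset.sum_congr rfl fun i _ => by ring
        _ = k.factorial * stirling (m + 1) (k + 1) := by rw [h]
        _ = (k+1).factorial * stirling m (k+1) + k.factorial * stirling m k := by
            rw [stirling_succ_succ', Nat.factorial_succ]; ring
    rw [Finset.sum_congr rfl hterm, ← Finset.sum_div, ← Finset.sum_mul, ← Nat.cast_sum, hnat]
    simp only [hf]
    push_cast
    ring

lemma expSumRealAux (k : ℕ) (r : ℝ) :
    HasSum (fun m => ((k.factorial * stirling m k : ℕ) : ℝ) * r ^ m / m.factorial)
      ((Real.exp r - 1) ^ k) := by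
  rw [← Complex.hasSum_ofReal]
  have h := expSumAux k (r : ℂ)
  have hv : (((Real.exp r - 1) ^ k : ℝ) : ℂ) = (Complex.exp r - 1) ^ k := by
    push_cast [Complex.ofReal_exp]
    ring
  rw [hv]
  apply h.congr_fun
  intro m
  push_cast
  ring

lemma coeff_unique {f : ℂ → ℂ} {a b : ℕ → ℂ}
    (ha : ∀ᶠ x in nhds 0, HasSum (fun n => a n * x ^ n) (f x))
    (hb : ∀ᶠ x in nhds 0, HasSum (fun n => b n * x ^ n) (f x)) : a = b := by
  have hcoeff : ∀ (c : ℕ → ℂ) (n : ℕ),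
      (FormalMultilinearSeries.ofScalars ℂ c).coeff n = c n := by
    intro c n
    show FormalMultilinearSeries.ofScalars ℂ c n (fun _ => (1 : ℂ)) = c n
    rw [FormalMultilinearSeries.ofScalars_apply_eq]
    simp
  have key : ∀ c : ℕ → ℂ, (∀ᶠ x in nhds 0, HasSum (fun n => c n * x ^ n) (f x)) →
      HasFPowerSeriesAt f (FormalMultilinearSeries.ofScalars ℂ c) 0 := by
    intro c hc
    rw [hasFPowerSeriesAt_iff]
    apply hc.mono
    intro x hx
    simpa [hcoeff, smul_eq_mul, mul_comm] using hx
  have h := (key a ha).eq_formalMultilinearSeries (key b hb)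
  funext n
  rw [← hcoeff a n, ← hcoeff b n, h]

theorem apostolBernoulli_number_closed_form_XuChen (z : ℂ) (hz : z ≠ 1) (B : ℕ → ℂ → ℂ)
    (hB : ∀ u : ℂ, ∀ᶠ x : ℂ in nhds 0,
      HasSum (fun m : ℕ => B m u * x ^ m / (m.factorial : ℂ))
        (x * Complex.exp (u * x) / (z * Complex.exp x - 1)))
    (n : ℕ) (hn : 1 ≤ n) :
    B n 0 = (-1 : ℂ) ^ (n - 1) * (n : ℂ) * ∑ k ∈ Finset.Icc 1 n,
      (((k - 1).factorial : ℂ) / (z - 1) ^ k) * (stirling n k : ℂ) := by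
  have hw : z - 1 ≠ 0 := sub_ne_zero.mpr hz
  have hwpos : 0 < ‖z - 1‖ := norm_pos_iff.mpr hw
  set e : ℕ → ℂ := fun m => (-1 : ℂ) ^ m / m.factorial *
    ∑ k ∈ Finset.range (m + 1),
      ((k.factorial * stirling m k + (k + 1).factorial * stirling m (k + 1) : ℕ) : ℂ)
        / (z - 1) ^ (k + 1) with he
  set a : ℕ → ℂ := fun n => if n = 0 then 0 else e (n - 1) with ha
  have claim1 : ∀ᶠ x : ℂ in nhds 0, HasSum (fun n => a n * x ^ n)
      (x / (z * Complex.exp x - 1)) := by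
    have hball : Metric.ball (0 : ℂ) (Real.log (1 + ‖z - 1‖)) ∈ nhds (0 : ℂ) :=
      Metric.ball_mem_nhds 0 (Real.log_pos (by linarith))
    filter_upwards [hball] with x hx
    rw [Metric.mem_ball, dist_zero_right] at hx
    have hv0 : (0 : ℝ) ≤ Real.exp ‖x‖ - 1 := by
      have := Real.one_le_exp (norm_nonneg x); linarith
    have hv : Real.exp ‖x‖ - 1 < ‖z - 1‖ := by
      have h1 : Real.exp ‖x‖ < Real.exp (Real.log (1 + ‖z - 1‖)) := Real.exp_lt_exp.mpr hx
      rw [Real.exp_log (by linarith)] at h1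
      linarith
    obtain ⟨u, hu⟩ : ∃ u, Complex.exp (-x) - 1 = u := ⟨_, rfl⟩
    have hub : ‖u‖ ≤ Real.exp ‖x‖ - 1 := by
      have hc := expSumAux 1 (-x)
      have hr := expSumRealAux 1 ‖x‖
      have hnorm : ∀ m, ‖((Nat.factorial 1 * stirling m 1 : ℕ) : ℂ) * (-x) ^ m / m.factorial‖
          = ((Nat.factorial 1 * stirling m 1 : ℕ) : ℝ) * ‖x‖ ^ m / m.factorial := by
        intro m
        simp [norm_div, norm_mul, norm_pow]
      have hsn : Summable (fun m =>
          ‖((Nat.factorial 1 * stirling m 1 : ℕ) : ℂ) * (-x) ^ m / m.factorial‖) := by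
        apply hr.summable.congr
        intro m
        rw [hnorm m]
      have hle := norm_tsum_le_tsum_norm hsn
      rw [hc.tsum_eq] at hle
      calc ‖u‖ = ‖(Complex.exp (-x) - 1) ^ 1‖ := by rw [pow_one, hu]
        _ ≤ ∑' m, ‖((Nat.factorial 1 * stirling m 1 : ℕ) : ℂ) * (-x) ^ m / m.factorial‖ := hle
        _ = Real.exp ‖x‖ - 1 := by
            rw [tsum_congr hnorm, hr.tsum_eq, pow_one]
    have hune : (z - 1) - u ≠ 0 := by
      intro h0
      have h1 : u = z - 1 := by linear_combination -h0
      rw [h1] at hub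
      linarith
    have hexpne : Complex.exp x ≠ 0 := Complex.exp_ne_zero x
    have hxx : Complex.exp x * Complex.exp (-x) = 1 := by
      rw [← Complex.exp_add]; simp
    have hden : z * Complex.exp x - 1 = Complex.exp x * ((z - 1) - u) := by
      rw [← hu]
      linear_combination hxx
    have hdenne : z * Complex.exp x - 1 ≠ 0 := by
      rw [hden]; exact mul_ne_zero hexpne hune
    have ht : ‖u / (z - 1)‖ < 1 := by
      rw [norm_div, div_lt_one hwpos]
      linarith
    have hgeo := hasSum_geometric_of_norm_lt_one ht
    have hgeo2 : HasSum (fun k => (u ^ k + u ^ (k + 1)) * (x / (z - 1) ^ (k + 1)))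
        (x / (z * Complex.exp x - 1)) := by
      have h1 := hgeo.mul_right (x * (1 + u) / (z - 1))
      have h2 : (1 - u / (z - 1))⁻¹ * (x * (1 + u) / (z - 1)) = x / (z * Complex.exp x - 1) := by
        have h3 : (1 : ℂ) - u / (z - 1) = ((z - 1) - u) / (z - 1) := by field_simp
        have h4 : (1 : ℂ) + u = Complex.exp (-x) := by rw [← hu]; ring
        rw [h3, inv_div, hden, h4, Complex.exp_neg]
        field_simp
      rw [h2] at h1
      apply h1.congr_fun
      intro k
      rw [div_pow]
      field_simp
      ring
    set F : ℕ × ℕ → ℂ := fun p =>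
      ((p.1.factorial * stirling p.2 p.1 + (p.1 + 1).factorial * stirling p.2 (p.1 + 1) : ℕ) : ℂ)
        * (-x) ^ p.2 / p.2.factorial * (x / (z - 1) ^ (p.1 + 1)) with hF
    have hfiber : ∀ k : ℕ, HasSum (fun m => F (k, m))
        ((u ^ k + u ^ (k + 1)) * (x / (z - 1) ^ (k + 1))) := by
      intro k
      have h1 := ((expSumAux k (-x)).add (expSumAux (k + 1) (-x))).mul_right
        (x / (z - 1) ^ (k + 1))
      rw [hu] at h1
      apply h1.congr_fun
      intro m
      simp only [hF]
      push_cast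
      ring
    have hfibnorm : ∀ k : ℕ, HasSum (fun m => ‖F (k, m)‖)
        (((Real.exp ‖x‖ - 1) ^ k + (Real.exp ‖x‖ - 1) ^ (k + 1))
          * (‖x‖ / ‖z - 1‖ ^ (k + 1))) := by
      intro k
      have h1 := ((expSumRealAux k ‖x‖).add (expSumRealAux (k + 1) ‖x‖)).mul_right
        (‖x‖ / ‖z - 1‖ ^ (k + 1))
      apply h1.congr_fun
      intro m
      simp only [hF]
      rw [norm_mul, norm_div, norm_mul, norm_pow, norm_neg, Complex.norm_natCast,
        Complex.norm_natCast, norm_div, norm_pow]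
      push_cast
      ring
    have houter : Summable (fun k => (((Real.exp ‖x‖ - 1) ^ k + (Real.exp ‖x‖ - 1) ^ (k + 1))
        * (‖x‖ / ‖z - 1‖ ^ (k + 1)))) := by
      have hratio : (Real.exp ‖x‖ - 1) / ‖z - 1‖ < 1 := (div_lt_one hwpos).mpr hv
      have hrat0 : 0 ≤ (Real.exp ‖x‖ - 1) / ‖z - 1‖ := div_nonneg hv0 hwpos.le
      have hs := (summable_geometric_of_lt_one hrat0 hratio).mul_right
        ((1 + (Real.exp ‖x‖ - 1)) * ‖x‖ / ‖z - 1‖)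
      apply hs.congr
      intro k
      rw [div_pow]
      field_simp
      ring
    have hFnormSum : Summable (fun p : ℕ × ℕ => ‖F p‖) := by
      rw [summable_prod_of_nonneg (fun p => norm_nonneg _)]
      refine ⟨fun k => (hfibnorm k).summable, ?_⟩
      apply houter.congr
      intro k
      exact ((hfibnorm k).tsum_eq).symm
    have hFsum : HasSum F (∑' p, F p) := hFnormSum.of_norm.hasSum
    have hcolumns : HasSum (fun k => (u ^ k + u ^ (k + 1)) * (x / (z - 1) ^ (k + 1)))
        (∑' p, F p) := hFsum.prod_fiberwise hfiber
    have hsum_eq : (∑' p, F p) = x / (z * Complex.exp x - 1) := hcolumns.unique hgeo2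
    rw [hsum_eq] at hFsum
    have hswap := ((Equiv.prodComm ℕ ℕ).hasSum_iff
      (f := F) (a := x / (z * Complex.exp x - 1))).mpr hFsum
    have hrows : ∀ m : ℕ, HasSum (fun k => F (k, m)) (a (m + 1) * x ^ (m + 1)) := by
      intro m
      have hz0 : ∀ k ∉ Finset.range (m + 1), F (k, m) = 0 := by
        intro k hk
        have hk' : m < k := by simpa using hk
        simp only [hF]
        rw [stirling_eq_zero_of_lt' hk', stirling_eq_zero_of_lt' (show m < k + 1 by omega)]
        simp
      have h1 := hasSum_sum_of_ne_finset_zero (L := SummationFilter.unconditional ℕ) hz0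
      have hpt : ∀ k ∈ Finset.range (m + 1), F (k, m)
          = (-1 : ℂ) ^ m / m.factorial
            * (((k.factorial * stirling m k + (k + 1).factorial * stirling m (k + 1) : ℕ) : ℂ)
              / (z - 1) ^ (k + 1)) * x ^ (m + 1) := by
        intro k _
        simp only [hF]
        rw [neg_pow]
        push_cast
        ring
      have h2 : ∑ k ∈ Finset.range (m + 1), F (k, m) = a (m + 1) * x ^ (m + 1) := by
        rw [Finset.sum_congr rfl hpt, ← Finset.sum_mul, ← Finset.mul_sum]
        simp only [ha, he]
        norm_num
      rwa [h2] at h1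
    have hcols2 : HasSum (fun m => a (m + 1) * x ^ (m + 1)) (x / (z * Complex.exp x - 1)) :=
      hswap.prod_fiberwise hrows
    have hfinal := (hasSum_nat_add_iff (f := fun n => a n * x ^ n) 1).mp hcols2
    simpa [ha] using hfinal
  have claim2 : ∀ᶠ x : ℂ in nhds 0, HasSum (fun m => (B m 0 / m.factorial) * x ^ m)
      (x / (z * Complex.exp x - 1)) := by
    filter_upwards [hB 0] with x hx
    have hval : x * Complex.exp (0 * x) / (z * Complex.exp x - 1) = x / (z * Complex.exp x - 1) := by
      rw [zero_mul, Complex.exp_zero, mul_one]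
    rw [hval] at hx
    apply hx.congr_fun
    intro m
    ring
  have habs := coeff_unique claim2 claim1
  have hBn : B n 0 / n.factorial = a n := congrFun habs n
  obtain ⟨m, rfl⟩ : ∃ m, n = m + 1 := ⟨n - 1, by omega⟩
  have hfac : ((m + 1).factorial : ℂ) ≠ 0 := Nat.cast_ne_zero.mpr (Nat.factorial_ne_zero _)
  have hBv : B (m + 1) 0 = ((m + 1).factorial : ℂ) * e m := by
    rw [div_eq_iff hfac] at hBn
    rw [hBn]
    simp only [ha]
    norm_num
    ring
  rw [hBv]
  have key : ∑ k ∈ Finset.range (m + 1),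
      ((k.factorial * stirling m k + (k + 1).factorial * stirling m (k + 1) : ℕ) : ℂ)
        / (z - 1) ^ (k + 1)
      = ∑ i ∈ Finset.range (m + 1),
        (((1 + i - 1).factorial : ℂ) / (z - 1) ^ (1 + i)) * (stirling (m + 1) (1 + i) : ℂ) := by
    apply Finset.sum_congr rfl
    intro k _
    have hnat : k.factorial * stirling m k + (k + 1).factorial * stirling m (k + 1)
        = k.factorial * stirling (m + 1) (k + 1) := by
      rw [stirling_succ_succ', Nat.factorial_succ]
      ring
    rw [hnat, show 1 + k - 1 = k from by omega, show 1 + k = k + 1 from by omega]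
    push_cast
    ring
  rw [← Finset.Ico_add_one_right_eq_Icc, Finset.sum_Ico_eq_sum_range,
    show m + 1 + 1 - 1 = m + 1 from rfl, ← key]
  simp only [he, show m + 1 - 1 = m from rfl]
  have hm : ((m + 1).factorial : ℂ) = (m + 1) * m.factorial := by
    push_cast [Nat.factorial_succ]
    ring
  have hmf : (m.factorial : ℂ) ≠ 0 := Nat.cast_ne_zero.mpr m.factorial_ne_zero
  rw [hm]
  push_cast
  field_simp
end

section
/- Let z be a complex number with z ≠ 1. For every integer n ≥ 1, under the conventions C(0,0)=1 and C(p,q)=0 for q > p ≥ 0, the Apostol–Bernoulli polynomial satisfies B_{n+1}(u,z) = ((-1)^n (n+1)/(z−1)^{n+1}) times the determinant of the n×n matrix with (ℓ,m)-entry C(ℓ,m)[z(1−u)^{ℓ−m} − (−u)^{ℓ−m}] for 1 ≤ ℓ ≤ n and 0 ≤ m ≤ n−1. -/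
open Filter Finset
open scoped Nat
open scoped ENNReal NNReal

lemma coeff_unique_s10 {c : ℕ → ℂ}
    (h : ∀ᶠ x : ℂ in nhds 0, HasSum (fun N : ℕ => c N * x ^ N) x) :
    ∀ N, c N = if N = 1 then 1 else 0 := by
  obtain ⟨r, hr, hball⟩ := Metric.eventually_nhds_iff.mp h
  set d : ℕ → ℂ := fun N => if N = 1 then 1 else 0 with hd
  have hrpos : (0:ℝ) < r / 2 := by positivity
  set ρ : NNReal := ⟨r/2, hrpos.le⟩ with hρ
  have habs : |r/2| = r/2 := abs_of_pos hrpos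
  have hdistρ : dist ((r/2 : ℝ) : ℂ) 0 < r := by
    rw [dist_zero_right, Complex.norm_real, Real.norm_eq_abs, habs]; linarith
  have hnorm : ∀ (e : ℕ → ℂ), Summable (fun N => e N * ((r/2 : ℝ) : ℂ) ^ N) →
      Summable (fun N => ‖e N‖ * (r/2) ^ N) := by
    intro e he
    have := summable_norm_iff.mpr he
    simp only [norm_mul, norm_pow, Complex.norm_real, Real.norm_eq_abs, habs] at this
    exact this
  have hrad : ∀ (e : ℕ → ℂ), Summable (fun N => ‖e N‖ * (r/2) ^ N) →
      (ρ : ENNReal) ≤ (FormalMultilinearSeries.ofScalars ℂ e).radius := by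
    intro e he
    apply FormalMultilinearSeries.le_radius_of_summable
    have hcoe : ((ρ:ℝ)) = r/2 := rfl
    convert he using 2 with N
    rw [FormalMultilinearSeries.ofScalars_norm, hcoe]
  have hmem : ∀ y : ℂ, y ∈ Metric.eball (0:ℂ) (ρ : ENNReal) → dist y 0 < r := by
    intro y hy
    rw [Metric.emetric_ball_nnreal] at hy
    have : dist y 0 < r/2 := hy
    linarith
  have hρpos : (0:ENNReal) < (ρ : ENNReal) := by
    rw [ENNReal.coe_pos]; exact hrpos
  have hsample : HasSum (fun N => c N * ((r/2 : ℝ) : ℂ) ^ N) ((r/2 : ℝ) : ℂ) :=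
    hball hdistρ
  have hp : HasFPowerSeriesAt id (FormalMultilinearSeries.ofScalars ℂ c) 0 := by
    refine ⟨(ρ : ENNReal), ?_, hρpos, ?_⟩
    · exact hrad c (hnorm c hsample.summable)
    · intro y hy
      rw [FormalMultilinearSeries.ofScalars_apply_eq']
      simp only [smul_eq_mul, id, zero_add]
      exact hball (hmem y hy)
  have hdsum : ∀ y : ℂ, HasSum (fun N => d N * y ^ N) y := by
    intro y
    have heq : (fun N : ℕ => d N * y ^ N) = fun N => if N = 1 then y else 0 := by
      funext N
      by_cases h1 : N = 1 <;> simp [hd, h1]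
    rw [heq]
    exact hasSum_ite_eq 1 y
  have hq : HasFPowerSeriesAt id (FormalMultilinearSeries.ofScalars ℂ d) 0 := by
    refine ⟨(ρ : ENNReal), ?_, hρpos, ?_⟩
    · exact hrad d (hnorm d (hdsum _).summable)
    · intro y hy
      rw [FormalMultilinearSeries.ofScalars_apply_eq']
      simp only [smul_eq_mul, id, zero_add]
      exact hdsum y
  have := hp.eq_formalMultilinearSeries hq
  rw [FormalMultilinearSeries.ofScalars_series_eq_iff] at this
  intro N
  exact congrFun this N

lemma apostol_rec (z : ℂ) (hz : z ≠ 1) (u : ℂ) (B : ℕ → ℂ → ℂ)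
    (h : ∀ᶠ x : ℂ in nhds 0,
      HasSum (fun m : ℕ => B m u * x ^ m / (m.factorial : ℂ))
        (x * Complex.exp (u * x) / (z * Complex.exp x - 1))) :
    ∀ N : ℕ, (∑ i ∈ range (N+1), (N.choose i : ℂ) * B i u *
        (z * (1-u) ^ (N-i) - (-u) ^ (N-i))) = if N = 1 then 1 else 0 := by
  set a : ℕ → ℂ := fun k => z * (1-u) ^ k - (-u) ^ k with ha
  set S : ℕ → ℂ := fun N => ∑ i ∈ range (N+1), (N.choose i : ℂ) * B i u * a (N-i) with hS
  set c : ℕ → ℂ := fun N => S N / (N.factorial : ℂ) with hc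
  have hzz : z - 1 ≠ 0 := sub_ne_zero.mpr hz
  have hne : ∀ᶠ x : ℂ in nhds 0, z * Complex.exp x - 1 ≠ 0 := by
    have hcont : ContinuousAt (fun x : ℂ => z * Complex.exp x - 1) 0 := by fun_prop
    have h0 : (fun x : ℂ => z * Complex.exp x - 1) 0 ≠ 0 := by
      simpa using hzz
    exact hcont.eventually_ne h0
  have hcu : ∀ N, c N = if N = 1 then 1 else 0 := by
    apply coeff_unique_s10
    filter_upwards [h, hne] with x hx hD
    set f : ℕ → ℂ := fun m => B m u * x ^ m / (m.factorial : ℂ) with hf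
    set g : ℕ → ℂ := fun k => a k * x ^ k / (k.factorial : ℂ) with hg
    have e1 : HasSum (fun k : ℕ => ((1-u)*x) ^ k / (k.factorial : ℂ))
        (Complex.exp ((1-u)*x)) := by
      rw [Complex.exp_eq_exp_ℂ]
      exact NormedSpace.expSeries_div_hasSum_exp _
    have e2 : HasSum (fun k : ℕ => ((-u)*x) ^ k / (k.factorial : ℂ))
        (Complex.exp ((-u)*x)) := by
      rw [Complex.exp_eq_exp_ℂ]
      exact NormedSpace.expSeries_div_hasSum_exp _
    have h2 : HasSum g (z * Complex.exp ((1-u)*x) - Complex.exp ((-u)*x)) := by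
      have := (e1.mul_left z).sub e2
      convert this using 2 with k
      · rfl
      simp only [hg, ha, mul_pow]
      ring
    have hf1 : Summable fun m => ‖f m‖ := summable_norm_iff.mpr hx.summable
    have hf2 : Summable fun m => ‖g m‖ := summable_norm_iff.mpr h2.summable
    have hFG : (x * Complex.exp (u * x) / (z * Complex.exp x - 1)) *
        (z * Complex.exp ((1-u)*x) - Complex.exp ((-u)*x)) = x := by
      have hexp : Complex.exp ((1-u)*x) = Complex.exp x * Complex.exp (-(u*x)) := by
        rw [← Complex.exp_add]; ring_nf
      have hG : z * Complex.exp ((1-u)*x) - Complex.exp ((-u)*x)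
          = Complex.exp (-(u*x)) * (z * Complex.exp x - 1) := by
        rw [hexp, neg_mul]; ring
      rw [hG, div_mul_eq_mul_div, show x * Complex.exp (u*x) *
          (Complex.exp (-(u*x)) * (z*Complex.exp x - 1)) =
          x * (Complex.exp (u*x) * Complex.exp (-(u*x))) * (z*Complex.exp x - 1) from by ring,
        ← Complex.exp_add, add_neg_cancel, Complex.exp_zero, mul_one,
        mul_div_assoc, div_self hD, mul_one]
    have hs := (summable_norm_sum_mul_antidiagonal_of_summable_norm hf1 hf2).of_norm
    have key : HasSum (fun N => ∑ kl ∈ antidiagonal N, f kl.1 * g kl.2) x := by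
      have := hs.hasSum
      rwa [← tsum_mul_tsum_eq_tsum_sum_antidiagonal_of_summable_norm hf1 hf2,
        hx.tsum_eq, h2.tsum_eq, hFG] at this
    convert key using 2 with N
    rw [Finset.Nat.sum_antidiagonal_eq_sum_range_succ_mk]
    rw [hc]
    simp only [hS]
    rw [div_mul_eq_mul_div, Finset.sum_mul, Finset.sum_div]
    refine Finset.sum_congr rfl fun i hi => ?_
    have hiN : i ≤ N := Nat.lt_succ_iff.mp (Finset.mem_range.mp hi)
    have hx' : x ^ i * x ^ (N-i) = x ^ N := by
      rw [← pow_add, Nat.add_sub_cancel' hiN]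
    have hfact : ((N.choose i : ℕ) : ℂ) * (i.factorial : ℂ) * ((N-i).factorial : ℂ)
        = (N.factorial : ℂ) := by
      push_cast [← Nat.choose_mul_factorial_mul_factorial hiN]
      ring
    have h1 : (i.factorial : ℂ) ≠ 0 := Nat.cast_ne_zero.mpr i.factorial_ne_zero
    have h2' : ((N-i).factorial : ℂ) ≠ 0 := Nat.cast_ne_zero.mpr (N-i).factorial_ne_zero
    have h3 : (N.factorial : ℂ) ≠ 0 := Nat.cast_ne_zero.mpr N.factorial_ne_zero
    rw [hf, hg]
    show (N.choose i : ℂ) * B i u * a (N-i) * x ^ N / (N.factorial : ℂ)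
      = B i u * x ^ i / (i.factorial : ℂ) * (a (N-i) * x ^ (N-i) / ((N-i).factorial : ℂ))
    rw [div_mul_div_comm, div_eq_div_iff h3 (mul_ne_zero h1 h2')]
    linear_combination (B i u * a (N-i) * x ^ N) * hfact
      - (B i u * a (N-i) * (N.factorial : ℂ)) * hx'
  intro N
  have := hcu N
  rw [hc] at this
  have h3 : (N.factorial : ℂ) ≠ 0 := Nat.cast_ne_zero.mpr N.factorial_ne_zero
  by_cases hN : N = 1
  · subst hN
    simp only [if_pos rfl] at this ⊢
    field_simp at this
    simpa [Nat.factorial] using this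
  · simp only [if_neg hN] at this ⊢
    exact (div_eq_zero_iff.mp this).resolve_right h3
lemma prod_shift (n : ℕ) : ∏ i ∈ Finset.range n, ((i:ℂ)+2)
    = ((n:ℂ)+1) * ∏ i ∈ Finset.range n, ((i:ℂ)+1) := by
  induction n with
  | zero => simp
  | succ k ih =>
    rw [Finset.prod_range_succ, Finset.prod_range_succ, ih]
    push_cast
    ring

theorem apostolBernoulli_det_form (z : ℂ) (hz : z ≠ 1) (B : ℕ → ℂ → ℂ)
    (hB : ∀ u : ℂ, ∀ᶠ x : ℂ in nhds 0,
      HasSum (fun m : ℕ => B m u * x ^ m / (m.factorial : ℂ))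
        (x * Complex.exp (u * x) / (z * Complex.exp x - 1)))
    (n : ℕ) (hn : 1 ≤ n) (u : ℂ) :
    B (n + 1) u = ((-1 : ℂ) ^ n * ((n : ℂ) + 1) / (z - 1) ^ (n + 1)) *
      Matrix.det (Matrix.of fun i j : Fin n =>
        (((i : ℕ) + 1).choose (j : ℕ) : ℂ) *
          (z * (1 - u) ^ ((i : ℕ) + 1 - (j : ℕ)) - (-u) ^ ((i : ℕ) + 1 - (j : ℕ)))) := by
  have hzz : z - 1 ≠ 0 := sub_ne_zero.mpr hz
  set a : ℕ → ℂ := fun k => z * (1-u) ^ k - (-u) ^ k with ha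
  have ha0 : a 0 = z - 1 := by simp [ha]
  have hrec := apostol_rec z hz u B (hB u)
  have hB0 : B 0 u = 0 := by
    have h0 := hrec 0
    simp only [zero_add, Finset.range_one, Finset.sum_singleton, Nat.choose_self, Nat.sub_self,
      pow_zero, mul_one, Nat.cast_one, one_mul] at h0
    norm_num at h0
    rcases h0 with h | h
    · exact h
    · exact absurd h hzz
  set M' : Matrix (Fin n) (Fin n) ℂ := Matrix.of (fun i j : Fin n =>
      (((i : ℕ) + 1).choose (j : ℕ) : ℂ) * a ((i : ℕ) + 1 - (j : ℕ))) with hM'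
  set A' : Matrix (Fin n) (Fin n) ℂ := Matrix.of (fun i j : Fin n =>
      (((i : ℕ) + 2).choose ((j : ℕ) + 1) : ℂ) * a ((i : ℕ) + 1 - (j : ℕ))) with hA'
  set T : Matrix (Fin (n+1)) (Fin (n+1)) ℂ := Matrix.of (fun N i : Fin (n+1) =>
      ((((N : ℕ) + 1).choose ((i : ℕ) + 1) : ℕ) : ℂ) * a ((N : ℕ) - (i : ℕ))) with hT
  set v : Fin (n+1) → ℂ := fun i => B ((i : ℕ) + 1) u with hv
  set b : Fin (n+1) → ℂ := fun N => if N = 0 then 1 else 0 with hb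
  -- the linear system
  have hmul : T.mulVec v = b := by
    funext N
    rw [Matrix.mulVec, dotProduct]
    have step1 : ∑ i : Fin (n+1), T N i * v i
        = ∑ i ∈ Finset.range (n+1),
            ((((N : ℕ) + 1).choose (i + 1) : ℕ) : ℂ) * a ((N : ℕ) - i) * B (i+1) u :=
      Fin.sum_univ_eq_sum_range
        (fun i => ((((N : ℕ) + 1).choose (i + 1) : ℕ) : ℂ) * a ((N : ℕ) - i) * B (i+1) u) (n+1)
    rw [step1]
    have step2 : ∑ i ∈ Finset.range (n+1),
          ((((N : ℕ) + 1).choose (i + 1) : ℕ) : ℂ) * a ((N : ℕ) - i) * B (i+1) u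
        = ∑ i ∈ Finset.range ((N : ℕ) + 1),
            ((((N : ℕ) + 1).choose (i + 1) : ℕ) : ℂ) * a ((N : ℕ) - i) * B (i+1) u := by
      refine (Finset.sum_subset ?_ ?_).symm
      · exact Finset.range_subset_range.mpr (Nat.succ_le_succ (Nat.lt_succ_iff.mp N.isLt))
      · intro i _ hi
        rw [Finset.mem_range, not_lt] at hi
        rw [Nat.choose_eq_zero_of_lt (by omega)]
        simp
    rw [step2]
    have hr := hrec ((N : ℕ) + 1)
    rw [Finset.sum_range_succ'] at hr
    simp only [Nat.choose_zero_right, hB0, Nat.succ_sub_succ] at hr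
    rw [mul_zero, zero_mul, add_zero] at hr
    have : ∑ i ∈ Finset.range ((N : ℕ) + 1),
          ((((N : ℕ) + 1).choose (i + 1) : ℕ) : ℂ) * a ((N : ℕ) - i) * B (i+1) u
        = ∑ i ∈ Finset.range ((N : ℕ) + 1),
            (((N : ℕ) + 1).choose (i + 1) : ℂ) * B (i+1) u * a ((N : ℕ) - i) := by
      refine Finset.sum_congr rfl fun i _ => by ring
    rw [this, hr, hb]
    by_cases hN0 : N = 0
    · subst hN0; simp
    · have : (N : ℕ) + 1 ≠ 1 := by
        intro h; exact hN0 (Fin.ext (by simp only [Fin.val_zero]; omega))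
      simp [hN0, this]
  -- Cramer's rule
  have cram : T.det • v = Matrix.cramer T b := by
    rw [Matrix.cramer_eq_adjugate_mulVec, ← hmul, Matrix.mulVec_mulVec,
      Matrix.adjugate_mul, Matrix.smul_mulVec, Matrix.one_mulVec]
  -- determinant of T
  have hdetT : T.det = (z - 1) ^ (n+1) := by
    rw [Matrix.det_of_lowerTriangular T ?_]
    · have : ∀ N : Fin (n+1), T N N = z - 1 := by
        intro N
        show ((((N : ℕ) + 1).choose ((N : ℕ) + 1) : ℕ) : ℂ) * a ((N : ℕ) - (N : ℕ)) = z - 1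
        rw [Nat.choose_self, Nat.sub_self, ha0]
        simp
      rw [Finset.prod_congr rfl fun N _ => this N]
      simp [Finset.card_univ]
    · intro i j hij
      have hij' : i < j := by simpa using hij
      show ((((i : ℕ) + 1).choose ((j : ℕ) + 1) : ℕ) : ℂ) * a ((i : ℕ) - (j : ℕ)) = 0
      rw [Nat.choose_eq_zero_of_lt (Nat.succ_lt_succ hij')]
      simp
  -- evaluate cramer at the last index
  have heval : (z - 1) ^ (n+1) * B (n+1) u
      = (T.updateCol (Fin.last n) b).det := by
    have := congrFun cram (Fin.last n)
    rw [Matrix.cramer_apply] at this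
    simp only [Pi.smul_apply, smul_eq_mul, hdetT] at this
    rw [← this, hv]
    simp [Fin.val_last]
  -- expand the determinant along the last column
  have hexpand : (T.updateCol (Fin.last n) b).det = (-1 : ℂ) ^ n * A'.det := by
    rw [Matrix.det_succ_column (T.updateCol (Fin.last n) b) (Fin.last n)]
    rw [Finset.sum_eq_single (0 : Fin (n+1))]
    · rw [Matrix.updateCol_self]
      have hsub : (T.updateCol (Fin.last n) b).submatrix
          (Fin.succAbove 0) (Fin.succAbove (Fin.last n)) = A' := by
        funext i j
        rw [Matrix.submatrix_apply, Fin.succAbove_zero, Fin.succAbove_last,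
          Matrix.updateCol_apply, if_neg (Fin.castSucc_lt_last j).ne]
        show ((((i.succ : ℕ) + 1).choose ((j.castSucc : ℕ) + 1) : ℕ) : ℂ)
            * a ((i.succ : ℕ) - (j.castSucc : ℕ)) = A' i j
        rw [hA']
        simp only [Fin.val_succ, Fin.coe_castSucc, Matrix.of_apply]
      rw [hsub, hb]
      simp [Fin.val_last]
    · intro i _ hi
      rw [Matrix.updateCol_self, hb]
      simp [hi]
    · intro h
      exact absurd (Finset.mem_univ _) h
  -- scaling relation
  have hscale : Matrix.diagonal (fun i : Fin n => ((i : ℕ) + 2 : ℂ)) * M'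
      = A' * Matrix.diagonal (fun j : Fin n => ((j : ℕ) + 1 : ℂ)) := by
    funext i j
    rw [Matrix.diagonal_mul, Matrix.mul_diagonal]
    show ((i : ℕ) + 2 : ℂ) * ((((i : ℕ) + 1).choose (j : ℕ) : ℂ) * a ((i : ℕ) + 1 - (j : ℕ)))
        = (((i : ℕ) + 2).choose ((j : ℕ) + 1) : ℂ) * a ((i : ℕ) + 1 - (j : ℕ)) * ((j : ℕ) + 1 : ℂ)
    have hnat : ((i : ℕ) + 2) * ((i : ℕ) + 1).choose (j : ℕ)
        = ((i : ℕ) + 2).choose ((j : ℕ) + 1) * ((j : ℕ) + 1) := by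
      have := Nat.add_one_mul_choose_eq ((i : ℕ) + 1) (j : ℕ)
      simpa [Nat.succ_eq_add_one] using this
    have hC : ((i : ℕ) + 2 : ℂ) * (((i : ℕ) + 1).choose (j : ℕ) : ℂ)
        = (((i : ℕ) + 2).choose ((j : ℕ) + 1) : ℂ) * ((j : ℕ) + 1 : ℂ) := by
      exact_mod_cast congrArg (Nat.cast : ℕ → ℂ) hnat
    calc ((i : ℕ) + 2 : ℂ) * ((((i : ℕ) + 1).choose (j : ℕ) : ℂ) * a ((i : ℕ) + 1 - (j : ℕ)))
        = (((i : ℕ) + 2 : ℂ) * (((i : ℕ) + 1).choose (j : ℕ) : ℂ)) * a ((i : ℕ) + 1 - (j : ℕ)) := by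
          ring
      _ = ((((i : ℕ) + 2).choose ((j : ℕ) + 1) : ℂ) * ((j : ℕ) + 1 : ℂ)) * a ((i : ℕ) + 1 - (j : ℕ)) := by
          rw [hC]
      _ = (((i : ℕ) + 2).choose ((j : ℕ) + 1) : ℂ) * a ((i : ℕ) + 1 - (j : ℕ)) * ((j : ℕ) + 1 : ℂ) := by
          ring
  -- take determinants
  have hdetscale : A'.det = ((n : ℂ) + 1) * M'.det := by
    have hd := congrArg Matrix.det hscale
    rw [Matrix.det_mul, Matrix.det_mul, Matrix.det_diagonal, Matrix.det_diagonal] at hd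
    have e2 : ∏ i : Fin n, ((i : ℕ) + 2 : ℂ) = ∏ i ∈ Finset.range n, ((i : ℂ) + 2) :=
      Fin.prod_univ_eq_prod_range (fun i => ((i : ℂ) + 2)) n
    have e1 : ∏ i : Fin n, ((i : ℕ) + 1 : ℂ) = ∏ i ∈ Finset.range n, ((i : ℂ) + 1) :=
      Fin.prod_univ_eq_prod_range (fun i => ((i : ℂ) + 1)) n
    rw [e2, e1, prod_shift] at hd
    have hP1 : (∏ i ∈ Finset.range n, ((i : ℂ) + 1)) ≠ 0 := by
      apply Finset.prod_ne_zero_iff.mpr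
      intro i _
      have : ((i+1 : ℕ) : ℂ) ≠ 0 := Nat.cast_ne_zero.mpr (Nat.succ_ne_zero i)
      simpa using this
    apply mul_right_cancel₀ hP1
    linear_combination -hd
  -- final assembly
  have hpow : (z - 1) ^ (n+1) ≠ 0 := pow_ne_zero _ hzz
  have hfinal : (z - 1) ^ (n+1) * B (n+1) u = (-1 : ℂ) ^ n * (((n : ℂ) + 1) * M'.det) := by
    rw [heval, hexpand, hdetscale]
  show B (n + 1) u = ((-1 : ℂ) ^ n * ((n : ℂ) + 1) / (z - 1) ^ (n + 1)) * M'.det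
  rw [div_mul_eq_mul_div, eq_div_iff hpow]
  linear_combination hfinal
end

section
/- Let z be a complex number with z ≠ 1. For every integer n ≥ 1, the Apostol–Bernoulli number satisfies B_{n+1}(z) = ((-1)^n (n+1)/(z−1)^{n+1}) times the determinant of the n×n matrix with (ℓ,m)-entry C(ℓ,m)(z − δ_{ℓm}) for 1 ≤ ℓ ≤ n and 0 ≤ m ≤ n−1, where δ_{ℓm} is the Kronecker delta. -/
open Finset

private lemma ab_exp_hasSum (x : ℂ) :
    HasSum (fun n : ℕ => x ^ n / (n.factorial : ℂ)) (Complex.exp x) := by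
  rw [Complex.exp_eq_exp_ℂ]
  exact NormedSpace.expSeries_div_hasSum_exp x

private lemma ab_ofScalars_coeff (c : ℕ → ℂ) (n : ℕ) :
    (FormalMultilinearSeries.ofScalars ℂ c).coeff n = c n := by
  simp [FormalMultilinearSeries.coeff, FormalMultilinearSeries.ofScalars, List.prod_ofFn]

private lemma ab_gSeries (z x : ℂ) :
    HasSum (fun k : ℕ => (if k = 0 then z - 1 else z / (k.factorial : ℂ)) * x ^ k)
      (z * Complex.exp x - 1) := by
  have h1 : HasSum (fun k : ℕ => z * (x ^ k / (k.factorial : ℂ))) (z * Complex.exp x) :=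
    (ab_exp_hasSum x).mul_left z
  have h2 : HasSum (fun k : ℕ => if k = 0 then (1 : ℂ) else 0) 1 := by
    simpa using hasSum_ite_eq 0 (1 : ℂ)
  have hfe : (fun k : ℕ => (if k = 0 then z - 1 else z / (k.factorial : ℂ)) * x ^ k)
      = fun k : ℕ => z * (x ^ k / (k.factorial : ℂ)) - (if k = 0 then (1 : ℂ) else 0) := by
    funext k
    rcases k with _ | k
    · simp [Nat.factorial]
    · simp [Nat.factorial]; ring
  rw [hfe]
  exact h1.sub h2

private lemma ab_gSeries_norm_summable (z x : ℂ) :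
    Summable (fun k : ℕ => ‖(if k = 0 then z - 1 else z / (k.factorial : ℂ)) * x ^ k‖) := by
  have hb : Summable (fun k : ℕ => (‖z‖ + 1) * (‖x‖ ^ k / (k.factorial : ℝ))) :=
    (Real.summable_pow_div_factorial ‖x‖).mul_left _
  refine Summable.of_nonneg_of_le (fun k => norm_nonneg _) (fun k => ?_) hb
  rcases k with _ | k
  · simpa [Nat.factorial] using (norm_sub_le z 1)
  · rw [if_neg (Nat.succ_ne_zero k), norm_mul, norm_div, norm_pow]
    rw [div_mul_eq_mul_div, mul_div_assoc]
    have h1 : ‖((k + 1).factorial : ℂ)‖ = ((k + 1).factorial : ℝ) := by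
      simp
    rw [h1]
    gcongr
    all_goals first
      | positivity
      | linarith [norm_nonneg z]

private lemma ab_recurrence (z : ℂ) (hz : z ≠ 1) (B : ℕ → ℂ → ℂ)
    (hB0 : ∀ᶠ x : ℂ in nhds 0,
      HasSum (fun m : ℕ => B m 0 * x ^ m / (m.factorial : ℂ))
        (x / (z * Complex.exp x - 1))) :
    ∀ m : ℕ, ∑ k ∈ Finset.range (m + 1),
        (B k 0 / (k.factorial : ℂ)) *
          (if m - k = 0 then z - 1 else z / ((m - k).factorial : ℂ))
      = if m = 1 then 1 else 0 := by
  have hp : HasFPowerSeriesAt (fun x : ℂ => x / (z * Complex.exp x - 1))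
      (FormalMultilinearSeries.ofScalars ℂ (fun m => B m 0 / (m.factorial : ℂ))) 0 := by
    rw [hasFPowerSeriesAt_iff]
    filter_upwards [hB0] with x hx
    have he : (fun m : ℕ => x ^ m • (FormalMultilinearSeries.ofScalars ℂ
        (fun m => B m 0 / (m.factorial : ℂ))).coeff m)
        = fun m : ℕ => B m 0 * x ^ m / (m.factorial : ℂ) := by
      funext m
      rw [ab_ofScalars_coeff, smul_eq_mul]
      ring
    rw [he, zero_add]
    exact hx
  obtain ⟨r, hr⟩ := hp
  have hnhds : EMetric.ball (0 : ℂ) r ∈ nhds (0 : ℂ) := EMetric.ball_mem_nhds _ hr.r_pos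
  have hg0 : ∀ᶠ x : ℂ in nhds 0, z * Complex.exp x - 1 ≠ 0 := by
    have hc : ContinuousAt (fun x : ℂ => z * Complex.exp x - 1) 0 :=
      ((continuous_const.mul Complex.continuous_exp).sub continuous_const).continuousAt
    apply hc.eventually_ne
    simpa [Complex.exp_zero, sub_ne_zero] using hz
  have hq : HasFPowerSeriesAt (fun w : ℂ => w)
      (FormalMultilinearSeries.ofScalars ℂ (fun n => ∑ k ∈ Finset.range (n + 1),
        (B k 0 / (k.factorial : ℂ)) *
          (if n - k = 0 then z - 1 else z / ((n - k).factorial : ℂ)))) 0 := by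
    rw [hasFPowerSeriesAt_iff]
    filter_upwards [hB0, hg0, hnhds] with x hx hgx hxball
    have hA : HasSum (fun m : ℕ => (B m 0 / (m.factorial : ℂ)) * x ^ m)
        (x / (z * Complex.exp x - 1)) := by
      have he : (fun m : ℕ => (B m 0 / (m.factorial : ℂ)) * x ^ m)
          = fun m : ℕ => B m 0 * x ^ m / (m.factorial : ℂ) := by
        funext m; ring
      rw [he]; exact hx
    have hAn : Summable fun m : ℕ => ‖(B m 0 / (m.factorial : ℂ)) * x ^ m‖ := by
      have hx' : x ∈ EMetric.ball (0 : ℂ)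
          (FormalMultilinearSeries.ofScalars ℂ (fun m => B m 0 / (m.factorial : ℂ))).radius :=
        EMetric.ball_subset_ball hr.r_le hxball
      have hsum := (FormalMultilinearSeries.ofScalars ℂ
        (fun m => B m 0 / (m.factorial : ℂ))).summable_norm_apply hx'
      refine hsum.congr fun m => ?_
      rw [FormalMultilinearSeries.ofScalars_apply_eq, smul_eq_mul]
    have hBn : Summable fun k : ℕ =>
        ‖(if k = 0 then z - 1 else z / (k.factorial : ℂ)) * x ^ k‖ :=
      ab_gSeries_norm_summable z x
    have hprod := hasSum_sum_range_mul_of_summable_norm hAn hBn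
    rw [hA.tsum_eq, (ab_gSeries z x).tsum_eq] at hprod
    have hxx : x / (z * Complex.exp x - 1) * (z * Complex.exp x - 1) = x :=
      div_mul_cancel₀ x hgx
    rw [hxx] at hprod
    have hterm : (fun n : ℕ => ∑ k ∈ Finset.range (n + 1),
        ((B k 0 / (k.factorial : ℂ)) * x ^ k) *
          ((if n - k = 0 then z - 1 else z / ((n - k).factorial : ℂ)) * x ^ (n - k)))
        = fun n : ℕ => x ^ n • (FormalMultilinearSeries.ofScalars ℂ
            (fun n => ∑ k ∈ Finset.range (n + 1), (B k 0 / (k.factorial : ℂ)) *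
              (if n - k = 0 then z - 1 else z / ((n - k).factorial : ℂ)))).coeff n := by
      funext n
      rw [ab_ofScalars_coeff, smul_eq_mul, Finset.mul_sum]
      refine Finset.sum_congr rfl fun k hk => ?_
      have hkn : k ≤ n := Finset.mem_range_succ_iff.mp hk
      rw [show x ^ n = x ^ k * x ^ (n - k) by rw [← pow_add, Nat.add_sub_cancel' hkn]]
      ring
    rw [hterm] at hprod
    rw [zero_add]
    exact hprod
  have hd : HasFPowerSeriesAt (fun w : ℂ => w)
      (FormalMultilinearSeries.ofScalars ℂ (fun n => if n = 1 then (1 : ℂ) else 0)) 0 := by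
    rw [hasFPowerSeriesAt_iff]
    filter_upwards with x
    have h1 : HasSum (fun n : ℕ => if n = 1 then x else 0) x := hasSum_ite_eq 1 x
    have he : (fun n : ℕ => x ^ n • (FormalMultilinearSeries.ofScalars ℂ
        (fun n => if n = 1 then (1 : ℂ) else 0)).coeff n)
        = fun n : ℕ => if n = 1 then x else 0 := by
      funext n
      rw [ab_ofScalars_coeff, smul_eq_mul]
      split
      · next h => subst h; simp
      · simp
    rw [he, zero_add]
    exact h1
  have heq := hq.eq_formalMultilinearSeries hd
  intro m
  have hcm := congrArg (fun p : FormalMultilinearSeries ℂ ℂ ℂ => p.coeff m) heq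
  simpa [ab_ofScalars_coeff] using hcm

private lemma ab_recur_binom (z : ℂ) (B : ℕ → ℂ → ℂ)
    (h : ∀ m : ℕ, ∑ k ∈ Finset.range (m + 1),
        (B k 0 / (k.factorial : ℂ)) *
          (if m - k = 0 then z - 1 else z / ((m - k).factorial : ℂ))
      = if m = 1 then 1 else 0) (m : ℕ) :
    ∑ k ∈ Finset.range (m + 1),
        ((m.choose k : ℂ) * (z - if k = m then 1 else 0) * B k 0)
      = if m = 1 then 1 else 0 := by
  have h2 := h m
  have key : ∀ k ∈ Finset.range (m + 1),
      (m.choose k : ℂ) * (z - if k = m then 1 else 0) * B k 0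
        = (m.factorial : ℂ) * ((B k 0 / (k.factorial : ℂ)) *
            (if m - k = 0 then z - 1 else z / ((m - k).factorial : ℂ))) := by
    intro k hk
    have hkm : k ≤ m := Finset.mem_range_succ_iff.mp hk
    have hkf : ((k.factorial : ℂ)) ≠ 0 := Nat.cast_ne_zero.mpr k.factorial_ne_zero
    rcases eq_or_ne k m with hke | hke
    · subst hke
      rw [if_pos rfl, if_pos (Nat.sub_self k), Nat.choose_self, Nat.cast_one]
      field_simp
    · have hlt : k < m := lt_of_le_of_ne hkm hke
      rw [if_neg hke, if_neg (by omega : ¬m - k = 0)]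
      rw [Nat.cast_choose ℂ hkm]
      have hmkf : (((m - k).factorial : ℂ)) ≠ 0 :=
        Nat.cast_ne_zero.mpr (m - k).factorial_ne_zero
      have hmf : ((m.factorial : ℂ)) ≠ 0 := Nat.cast_ne_zero.mpr m.factorial_ne_zero
      field_simp
      ring
  rw [Finset.sum_congr rfl key, ← Finset.mul_sum, h2]
  rcases eq_or_ne m 1 with hm | hm
  · subst hm; simp [Nat.factorial]
  · simp [hm]

private lemma ab_prod_add_two (n : ℕ) :
    (∏ i ∈ Finset.range n, (i + 2)) = (n + 1).factorial := by
  induction n with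
  | zero => simp [Nat.factorial]
  | succ k ih =>
    rw [Finset.prod_range_succ, ih]
    conv_rhs => rw [Nat.factorial_succ]
    ring

theorem apostolBernoulli_number_det_form (z : ℂ) (hz : z ≠ 1) (B : ℕ → ℂ → ℂ)
    (hB : ∀ u : ℂ, ∀ᶠ x : ℂ in nhds 0,
      HasSum (fun m : ℕ => B m u * x ^ m / (m.factorial : ℂ))
        (x * Complex.exp (u * x) / (z * Complex.exp x - 1)))
    (n : ℕ) (hn : 1 ≤ n) :
    B (n + 1) 0 = ((-1 : ℂ) ^ n * ((n : ℂ) + 1) / (z - 1) ^ (n + 1)) *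
      Matrix.det (Matrix.of fun i j : Fin n =>
        (((i : ℕ) + 1).choose (j : ℕ) : ℂ) *
          (z - if ((i : ℕ) + 1) = (j : ℕ) then 1 else 0)) := by
  have hz1 : (z - 1) ≠ 0 := sub_ne_zero.mpr hz
  have hB0 : ∀ᶠ x : ℂ in nhds 0,
      HasSum (fun m : ℕ => B m 0 * x ^ m / (m.factorial : ℂ))
        (x / (z * Complex.exp x - 1)) := by
    filter_upwards [hB 0] with x hx
    simpa [Complex.exp_zero] using hx
  have hrec := ab_recur_binom z B (ab_recurrence z hz B hB0)
  have hB00 : B 0 0 = 0 := by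
    have h0 := hrec 0
    norm_num at h0
    rcases h0 with h0 | h0
    · exact absurd h0 hz1
    · exact h0
  set M : Matrix (Fin n) (Fin n) ℂ := Matrix.of fun i j : Fin n =>
      (((i : ℕ) + 1).choose (j : ℕ) : ℂ) *
        (z - if ((i : ℕ) + 1) = (j : ℕ) then 1 else 0) with hM
  set T : Matrix (Fin (n + 1)) (Fin (n + 1)) ℂ := Matrix.of fun i j : Fin (n + 1) =>
      (((i : ℕ) + 1).choose ((j : ℕ) + 1) : ℂ) *
        (z - if (i : ℕ) = (j : ℕ) then 1 else 0) with hT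
  set u : Fin (n + 1) → ℂ := fun j => B ((j : ℕ) + 1) 0 with hu
  have hdetT : T.det = (z - 1) ^ (n + 1) := by
    have htri : T.BlockTriangular OrderDual.toDual := by
      intro i j hij
      have hij' : i < j := hij
      have h1 : (i : ℕ) + 1 < (j : ℕ) + 1 := by
        have := Fin.lt_iff_val_lt_val.mp hij'
        omega
      simp [hT, Nat.choose_eq_zero_of_lt h1]
    rw [Matrix.det_of_lowerTriangular T htri]
    have hdiag : ∀ i : Fin (n + 1), T i i = z - 1 := by
      intro i; simp [hT]
    rw [Finset.prod_congr rfl fun i _ => hdiag i]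
    simp
  have hmulvec : T.mulVec u = Pi.single 0 1 := by
    funext i
    have e1 : T.mulVec u i = ∑ j ∈ Finset.range (n + 1),
        ((((i : ℕ) + 1).choose (j + 1) : ℂ) * (z - if (i : ℕ) = j then 1 else 0)
          * B (j + 1) 0) := by
      rw [show T.mulVec u i = ∑ j : Fin (n + 1),
          ((((i : ℕ) + 1).choose ((j : ℕ) + 1) : ℂ) *
            (z - if (i : ℕ) = (j : ℕ) then 1 else 0) * B ((j : ℕ) + 1) 0) by
        simp [Matrix.mulVec, dotProduct, hT, hu]]
      exact Fin.sum_univ_eq_sum_range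
        (fun j => (((i : ℕ) + 1).choose (j + 1) : ℂ) *
          (z - if (i : ℕ) = j then 1 else 0) * B (j + 1) 0) (n + 1)
    have e2 : ∑ j ∈ Finset.range ((i : ℕ) + 1),
        ((((i : ℕ) + 1).choose (j + 1) : ℂ) * (z - if (i : ℕ) = j then 1 else 0)
          * B (j + 1) 0)
        = ∑ j ∈ Finset.range (n + 1),
        ((((i : ℕ) + 1).choose (j + 1) : ℂ) * (z - if (i : ℕ) = j then 1 else 0)
          * B (j + 1) 0) := by
      refine Finset.sum_subset (Finset.range_subset_range.mpr (by have := i.is_le; omega)) ?_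
      intro j hj hnj
      have hgt : (i : ℕ) + 1 < j + 1 := by
        
        simp [Finset.mem_range] at hj hnj
        omega
      simp [Nat.choose_eq_zero_of_lt hgt]
    have hrecI := hrec ((i : ℕ) + 1)
    rw [Finset.sum_range_succ'] at hrecI
    have hz0 : (((i : ℕ) + 1).choose 0 : ℂ) *
        (z - if 0 = (i : ℕ) + 1 then 1 else 0) * B 0 0 = 0 := by
      rw [hB00, mul_zero]
    rw [hz0, add_zero] at hrecI
    have e3 : ∑ j ∈ Finset.range ((i : ℕ) + 1),
        ((((i : ℕ) + 1).choose (j + 1) : ℂ) *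
          (z - if j + 1 = (i : ℕ) + 1 then 1 else 0) * B (j + 1) 0)
        = ∑ j ∈ Finset.range ((i : ℕ) + 1),
        ((((i : ℕ) + 1).choose (j + 1) : ℂ) * (z - if (i : ℕ) = j then 1 else 0)
          * B (j + 1) 0) := by
      refine Finset.sum_congr rfl fun j _ => ?_
      have hpe : (j + 1 = (i : ℕ) + 1) = ((i : ℕ) = j) := by
        apply propext; constructor <;> omega
      simp only [hpe]
    rw [e3] at hrecI
    rw [e1, ← e2, hrecI]
    rw [Pi.single_apply]
    have hcond : ((i : ℕ) + 1 = 1) ↔ (i = (0 : Fin (n + 1))) := by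
      rw [Fin.ext_iff, Fin.val_zero]; omega
    exact if_congr hcond rfl rfl
  have h5 : T.adjugate.mulVec (Pi.single 0 1) = T.det • u := by
    rw [← hmulvec, Matrix.mulVec_mulVec, Matrix.adjugate_mul,
      Matrix.smul_mulVec, Matrix.one_mulVec]
  have h6 : T.adjugate.mulVec (Pi.single 0 1) (Fin.last n) = T.adjugate (Fin.last n) 0 := by
    rw [Matrix.mulVec_single]
    simp
  have h7 : (T.updateRow 0 (Pi.single (Fin.last n) 1)).det
      = (-1 : ℂ) ^ n * (T.submatrix Fin.succ Fin.castSucc).det := by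
    rw [Matrix.det_succ_row_zero]
    rw [Finset.sum_eq_single (Fin.last n)]
    · rw [Matrix.updateRow_self, Pi.single_eq_same, ← Fin.succAbove_zero,
        Matrix.submatrix_updateRow_succAbove, Fin.succAbove_last, Fin.val_last]
      ring
    · intro j _ hj
      rw [Matrix.updateRow_self, Pi.single_eq_of_ne hj]
      ring
    · intro h; exact absurd (Finset.mem_univ _) h
  have hN : T.submatrix Fin.succ Fin.castSucc
      = Matrix.diagonal (fun i : Fin n => (((i : ℕ) : ℂ) + 2)) * M *
        Matrix.diagonal (fun j : Fin n => (((j : ℕ) : ℂ) + 1)⁻¹) := by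
    ext i j
    rw [Matrix.mul_diagonal, Matrix.diagonal_mul, Matrix.submatrix_apply]
    simp only [hT, hM, Matrix.of_apply, Fin.val_succ, Fin.coe_castSucc]
    have hnat : ((i : ℕ) + 2) * (((i : ℕ) + 1).choose (j : ℕ))
        = ((((i : ℕ) + 1) + 1).choose ((j : ℕ) + 1)) * ((j : ℕ) + 1) := by
      have := Nat.add_one_mul_choose_eq ((i : ℕ) + 1) (j : ℕ)
      simpa [Nat.succ_eq_add_one] using this
    have hc : (((i : ℕ) : ℂ) + 2) * ((((i : ℕ) + 1).choose (j : ℕ) : ℕ) : ℂ)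
        = ((((((i : ℕ) + 1) + 1).choose ((j : ℕ) + 1)) : ℕ) : ℂ) * (((j : ℕ) : ℂ) + 1) := by
      exact_mod_cast hnat
    have hj1 : (((j : ℕ) : ℂ) + 1) ≠ 0 := Nat.cast_add_one_ne_zero _
    rw [eq_mul_inv_iff_mul_eq₀ hj1]
    linear_combination (-(z - if (i : ℕ) + 1 = (j : ℕ) then 1 else 0)) * hc
  have h8 : (T.submatrix Fin.succ Fin.castSucc).det = ((n : ℂ) + 1) * M.det := by
    rw [hN, Matrix.det_mul, Matrix.det_mul, Matrix.det_diagonal, Matrix.det_diagonal]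
    have p1 : (∏ i : Fin n, (((i : ℕ) : ℂ) + 2)) = (((n + 1).factorial : ℕ) : ℂ) := by
      rw [Fin.prod_univ_eq_prod_range (fun k : ℕ => ((k : ℂ) + 2)) n, ← ab_prod_add_two n,
        Nat.cast_prod]
      push_cast
      rfl
    have p2 : (∏ j : Fin n, (((j : ℕ) : ℂ) + 1)⁻¹) = (((n.factorial : ℕ) : ℂ))⁻¹ := by
      rw [Finset.prod_inv_distrib]
      congr 1
      rw [Fin.prod_univ_eq_prod_range (fun k : ℕ => ((k : ℂ) + 1)) n,
        ← Finset.prod_range_add_one_eq_factorial n, Nat.cast_prod]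
      push_cast
      rfl
    rw [p1, p2]
    have hf : ((n.factorial : ℕ) : ℂ) ≠ 0 := Nat.cast_ne_zero.mpr n.factorial_ne_zero
    have hfs : (((n + 1).factorial : ℕ) : ℂ) = ((n : ℂ) + 1) * ((n.factorial : ℕ) : ℂ) := by
      rw [Nat.factorial_succ]; push_cast; ring
    rw [hfs]
    field_simp
  have hfinal : (-1 : ℂ) ^ n * (((n : ℂ) + 1) * M.det) = (z - 1) ^ (n + 1) * B (n + 1) 0 := by
    have h9 : T.adjugate (Fin.last n) 0 = (-1 : ℂ) ^ n * (((n : ℂ) + 1) * M.det) := by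
      rw [Matrix.adjugate_apply, h7, h8]
    have h10 : T.adjugate.mulVec (Pi.single 0 1) (Fin.last n)
        = (z - 1) ^ (n + 1) * B (n + 1) 0 := by
      rw [h5, hdetT]
      simp [hu, Fin.val_last]
    rw [← h9, ← h6, h10]
  have hpow : ((z - 1) ^ (n + 1)) ≠ 0 := pow_ne_zero _ hz1
  field_simp
  linear_combination -hfinal
end
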